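/- arXiv:0906.5212 — 7 statements merged into one kernel-verified Lean document; each statement's English description precedes it below -/
import Mathlib

section
/- If C ⊆ ℝ^p is a lattice point free convex set (no integer point in its relative interior) and r ∈ ℚ^p is a rational vector in the recession cone of C, then C + span{r} is also lattice point free. -/
set_option synthInstance.maxHeartbeats 1000000
set_option maxHeartbeats 1000000


open Pointwise

/-- A convex set `C ⊆ ℝ^p` is lattice point free if its relative interior
contains no integer point. -/
def LatticeFree {p : ℕ} (C : Set (Fin p → ℝ)) : Prop :=
  ∀ x ∈ intrinsicInterior ℝ C, ¬ ∀ i, ∃ z : ℤ, x i = (z : ℝ)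

/-- Metric characterization of the intrinsic interior. -/
lemma mem_intrinsicInterior_iff_ball {E : Type*} [NormedAddCommGroup E] [NormedSpace ℝ E]
    {s : Set E} {x : E} :
    x ∈ intrinsicInterior ℝ s ↔
      x ∈ affineSpan ℝ s ∧ ∃ ε > 0, ∀ z, z ∈ affineSpan ℝ s → dist z x < ε → z ∈ s := by
  constructor
  · rintro ⟨⟨y, hy⟩, hmem, rfl⟩
    refine ⟨hy, ?_⟩
    rw [mem_interior_iff_mem_nhds, Metric.mem_nhds_iff] at hmem
    obtain ⟨ε, hε, hball⟩ := hmem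
    refine ⟨ε, hε, fun z hz hdist => ?_⟩
    exact hball (show (⟨z, hz⟩ : affineSpan ℝ s) ∈ Metric.ball _ _ by
      simpa [Metric.mem_ball, Subtype.dist_eq] using hdist)
  · rintro ⟨hx, ε, hε, h⟩
    refine ⟨⟨x, hx⟩, ?_, rfl⟩
    rw [mem_interior_iff_mem_nhds, Metric.mem_nhds_iff]
    refine ⟨ε, hε, fun z hz => h z z.2 ?_⟩
    simpa [Metric.mem_ball, Subtype.dist_eq] using hz

/-- Segment lemma: a convex combination (with positive weight on the intrinsic interior
point) of an intrinsic interior point and a point of the set is in the intrinsic interior. -/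
lemma ri_segment {E : Type*} [NormedAddCommGroup E] [NormedSpace ℝ E] {s : Set E}
    (hs : Convex ℝ s) {w c : E} (hw : w ∈ intrinsicInterior ℝ s) (hc : c ∈ s)
    {θ : ℝ} (hθ0 : 0 < θ) (hθ1 : θ ≤ 1) :
    θ • w + (1 - θ) • c ∈ intrinsicInterior ℝ s := by
  rw [mem_intrinsicInterior_iff_ball] at hw ⊢
  obtain ⟨hwA, ε, hε, hball⟩ := hw
  have hcA : c ∈ affineSpan ℝ s := subset_affineSpan ℝ s hc
  have hθ : θ ≠ 0 := ne_of_gt hθ0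
  have hmA : θ • w + (1 - θ) • c ∈ affineSpan ℝ s := by
    have := (affineSpan ℝ s).smul_vsub_vadd_mem θ hwA hcA hcA
    have heq : θ • (w -ᵥ c) +ᵥ c = θ • w + (1 - θ) • c := by
      simp only [vsub_eq_sub, vadd_eq_add]; module
    rwa [heq] at this
  refine ⟨hmA, θ * ε, by positivity, fun z hz hdist => ?_⟩
  set m := θ • w + (1 - θ) • c with hm
  set y' := θ⁻¹ • (z - m) + w with hy'
  have hy'A : y' ∈ affineSpan ℝ s := by
    have := (affineSpan ℝ s).smul_vsub_vadd_mem θ⁻¹ hz hmA hwA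
    simpa [vsub_eq_sub, vadd_eq_add] using this
  have hdy : dist y' w < ε := by
    have h0 : y' - w = θ⁻¹ • (z - m) := by rw [hy']; abel
    have : dist y' w = θ⁻¹ * ‖z - m‖ := by
      rw [dist_eq_norm, h0, norm_smul, Real.norm_eq_abs, abs_of_pos (inv_pos.2 hθ0)]
    rw [this]
    have hzm : ‖z - m‖ < θ * ε := by rwa [dist_eq_norm] at hdist
    calc θ⁻¹ * ‖z - m‖ < θ⁻¹ * (θ * ε) := by
          exact mul_lt_mul_of_pos_left hzm (inv_pos.2 hθ0)
      _ = ε := by field_simp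
  have hy's : y' ∈ s := hball y' hy'A hdy
  have hzeq : z = θ • y' + (1 - θ) • c := by
    simp only [hy', hm]
    match_scalars <;> field_simp <;> ring
  rw [hzeq]
  exact hs hy's hc hθ0.le (by linarith) (by ring)

/-- Extension lemma: from an intrinsic interior point one can move slightly past it away
from any point of the set while staying in the set. -/
lemma ri_extend {E : Type*} [NormedAddCommGroup E] [NormedSpace ℝ E] {s : Set E} {x w : E}
    (hx : x ∈ intrinsicInterior ℝ s) (hw : w ∈ s) :
    ∃ δ : ℝ, 0 < δ ∧ x + δ • (x - w) ∈ s := by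
  rw [mem_intrinsicInterior_iff_ball] at hx
  obtain ⟨hxA, ε, hε, hball⟩ := hx
  set δ := ε / (2 * (‖x - w‖ + 1)) with hδdef
  have hδ : 0 < δ := by positivity
  refine ⟨δ, hδ, hball _ ?_ ?_⟩
  · have := (affineSpan ℝ s).smul_vsub_vadd_mem δ hxA (subset_affineSpan ℝ s hw) hxA
    simpa [vsub_eq_sub, vadd_eq_add, add_comm] using this
  · have h1 : dist (x + δ • (x - w)) x = δ * ‖x - w‖ := by
      rw [dist_eq_norm]
      simp [norm_smul, abs_of_pos hδ]
    rw [h1]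
    have h2 : δ * (2 * (‖x - w‖ + 1)) = ε := by
      rw [hδdef]; exact div_mul_cancel₀ _ (by positivity)
    nlinarith [norm_nonneg (x - w)]

theorem stmt0 {p : ℕ} (C : Set (Fin p → ℝ)) (hC : Convex ℝ C)
    (hfree : LatticeFree C) (r : Fin p → ℝ)
    (hrQ : ∀ i, ∃ q : ℚ, r i = (q : ℝ))
    (hrec : ∀ x ∈ C, ∀ μ : ℝ, 0 ≤ μ → x + μ • r ∈ C) :
    LatticeFree (C + (Submodule.span ℝ ({r} : Set (Fin p → ℝ)) : Set (Fin p → ℝ))) := by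
  set L := Submodule.span ℝ ({r} : Set (Fin p → ℝ)) with hL
  -- recession into the intrinsic interior
  have hrecri : ∀ y ∈ intrinsicInterior ℝ C, ∀ μ : ℝ, 0 ≤ μ →
      y + μ • r ∈ intrinsicInterior ℝ C := by
    intro y hy μ hμ
    rcases eq_or_lt_of_le hμ with h | h
    · simpa [← h] using hy
    · have hc : y + (2 * μ) • r ∈ C :=
        hrec y (intrinsicInterior_subset hy) _ (by positivity)
      have := ri_segment hC hy hc (θ := 1/2) (by norm_num) (by norm_num)
      have heq : (1/2 : ℝ) • y + (1 - 1/2 : ℝ) • (y + (2*μ) • r) = y + μ • r := by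
        match_scalars <;> ring
      rwa [heq] at this
  intro x hx hint
  -- decompose an integer multiple of r
  choose q hq using hrQ
  set N : ℕ := ∏ i, (q i).den with hN
  have hNpos : 0 < N := Finset.prod_pos fun i _ => (q i).pos
  have hNr : ∀ i, ∃ z : ℤ, (N : ℝ) * r i = (z : ℝ) := by
    intro i
    obtain ⟨k, hk⟩ : ((q i).den : ℤ) ∣ (N : ℤ) := by
      exact_mod_cast Int.natCast_dvd_natCast.2 (Finset.dvd_prod_of_mem _ (Finset.mem_univ i))
    refine ⟨(q i).num * k, ?_⟩
    have hden : ((q i).den : ℝ) ≠ 0 := Nat.cast_ne_zero.2 (q i).den_nz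
    have hk' : (N : ℝ) = ((q i).den : ℝ) * (k : ℝ) := by exact_mod_cast hk
    have hcast : ((q i : ℚ) : ℝ) = ((q i).num : ℝ) / ((q i).den : ℝ) := by
      rw [Rat.cast_def]
    rw [hq i, hcast, hk']
    push_cast
    field_simp
  -- x ∈ C + L, C nonempty
  have hxS : x ∈ C + (L : Set (Fin p → ℝ)) := intrinsicInterior_subset hx
  obtain ⟨c₀, hc₀, l₀, hl₀, hxdec⟩ := Set.mem_add.1 hxS
  have hCne : C.Nonempty := ⟨c₀, hc₀⟩
  haveI : Nonempty ↥(affineSpan ℝ C) := ⟨⟨c₀, subset_affineSpan ℝ C hc₀⟩⟩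
  obtain ⟨w, hw⟩ := hCne.intrinsicInterior hC
  have hwS : w ∈ C + (L : Set (Fin p → ℝ)) :=
    ⟨w, intrinsicInterior_subset hw, 0, L.zero_mem, by simp⟩
  -- extension
  obtain ⟨δ, hδ, hext⟩ := ri_extend hx hwS
  obtain ⟨c₁, hc₁, l₁, hl₁, hdec⟩ := Set.mem_add.1 hext
  have h1δ : (0:ℝ) < 1 + δ := by linarith
  -- x = y + l₂ with y ∈ ri C, l₂ ∈ L
  set θ : ℝ := δ / (1 + δ) with hθ
  have hθ0 : 0 < θ := by positivity
  have hθ1 : θ ≤ 1 := by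
    rw [hθ, div_le_one h1δ]; linarith
  have hy : θ • w + (1 - θ) • c₁ ∈ intrinsicInterior ℝ C := ri_segment hC hw hc₁ hθ0 hθ1
  set y := θ • w + (1 - θ) • c₁ with hydef
  have hl₂ : ((1 + δ)⁻¹) • l₁ ∈ L := L.smul_mem _ hl₁
  obtain ⟨s, hs⟩ := Submodule.mem_span_singleton.1 hl₂
  have hxy : x = y + s • r := by
    have h1 : x + δ • (x - w) = c₁ + l₁ := hdec.symm
    have h2 : (1 + δ) • x = c₁ + l₁ + δ • w := by
      have : (1 + δ) • x = x + δ • (x - w) + δ • w := by match_scalars <;> ring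
      rw [this, h1]
    have h3 : x = (1 + δ)⁻¹ • (c₁ + l₁ + δ • w) := by
      rw [← h2, inv_smul_smul₀ (ne_of_gt h1δ)]
    rw [h3, hydef, hs, hθ]
    have h1δ' : (1 + δ) ≠ 0 := ne_of_gt h1δ
    match_scalars <;> field_simp <;> ring
  -- choose m so that s + m * N ≥ 0
  set m : ℤ := ⌈(-s) / (N : ℝ)⌉ with hm
  have hmN : 0 ≤ s + (m : ℝ) * N := by
    have h1 : (-s) / (N : ℝ) ≤ (m : ℝ) := Int.le_ceil _
    have h2 : (-s) ≤ (m : ℝ) * N := by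
      rw [div_le_iff₀ (by exact_mod_cast hNpos)] at h1
      linarith
    linarith
  -- the contradiction point
  set zpt := y + (s + (m : ℝ) * N) • r with hz
  have hzri : zpt ∈ intrinsicInterior ℝ C := hrecri y hy _ hmN
  refine hfree zpt hzri fun i => ?_
  obtain ⟨a, ha⟩ := hint i
  obtain ⟨b, hb⟩ := hNr i
  refine ⟨a + m * b, ?_⟩
  have : zpt i = x i + (m : ℝ) * ((N : ℝ) * r i) := by
    rw [hz, hxy]
    simp [Pi.add_apply, Pi.smul_apply, smul_eq_mul]
    ring
  rw [this, ha, hb]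
  push_cast
  ring
end

section
/- Let P = conv({v^i}_{i∈V}) + cone({r^j}_{j∈E}) be a rational polyhedron and L ⊂ ℝ^n a mixed integer split polyhedron. Then conv({x ∈ P : x ∉ int(L)}) ≠ P if and only if some vertex v^i of P lies in the interior of L. -/
open Pointwise

/-- A rational polyhedron in `ℝ^p`. -/
def IsRatPolyhedron {p : ℕ} (C : Set (Fin p → ℝ)) : Prop :=
  ∃ (m : ℕ) (A : Fin m → Fin p → ℚ) (b : Fin m → ℚ),
    C = {x | ∀ i, ∑ j, (A i j : ℝ) * x j ≤ (b i : ℝ)}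

/-- A split polyhedron: a maximal (wrt. inclusion among lattice point free
convex sets) lattice point free rational polyhedron. -/
def IsSplitPolyhedron {p : ℕ} (Lx : Set (Fin p → ℝ)) : Prop :=
  IsRatPolyhedron Lx ∧ LatticeFree Lx ∧
    ∀ C : Set (Fin p → ℝ), Convex ℝ C → LatticeFree C → Lx ⊆ C → C = Lx

/-- A mixed integer split polyhedron in `ℝ^n` (first `p` coordinates integer
constrained): the cylinder over a split polyhedron in `ℝ^p`. -/
def IsMISplit {p n : ℕ} (h : p ≤ n) (L : Set (Fin n → ℝ)) : Prop :=
  ∃ Lx : Set (Fin p → ℝ), IsSplitPolyhedron Lx ∧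
    L = {z | (fun i : Fin p => z (Fin.castLE h i)) ∈ Lx}

open Set

lemma rat_kernel_approx {p : ℕ} {ι : Type*} [Fintype ι] (B : ι → Fin p → ℚ)
    (d : Fin p → ℝ) (hd : ∀ i, ∑ j, (B i j : ℝ) * d j = 0) {ε : ℝ} (hε : 0 < ε) :
    ∃ h : Fin p → ℚ, (∀ i, ∑ j, B i j * h j = 0) ∧ ∀ j, |(h j : ℝ) - d j| < ε := by
  classical
  set bb := Module.Basis.ofVectorSpace ℚ ℝ with hbb
  set F : Finset (Module.Basis.ofVectorSpaceIndex ℚ ℝ) :=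
    Finset.univ.sup (fun j : Fin p => (bb.repr (d j)).support) with hF
  set c : Module.Basis.ofVectorSpaceIndex ℚ ℝ → Fin p → ℚ := fun e j => bb.repr (d j) e with hc
  -- d as combination
  have hdj : ∀ j, d j = ∑ e ∈ F, (c e j : ℝ) * bb e := by
    intro j
    conv_lhs => rw [← bb.linearCombination_repr (d j)]
    rw [Finsupp.linearCombination_apply,
      Finsupp.sum_of_support_subset _ (Finset.le_sup (f := fun j => (bb.repr (d j)).support) (Finset.mem_univ j)) _ (by simp)]
    refine Finset.sum_congr rfl fun e _ => ?_
    rw [Rat.smul_def]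
  -- each c e is in the rational kernel
  have hker : ∀ e i, ∑ j, B i j * c e j = 0 := by
    intro e i
    have h0 : (Finsupp.lapply e ∘ₗ (bb.repr : ℝ →ₗ[ℚ] _)) (∑ j, (B i j : ℝ) * d j)
        = ∑ j, B i j * c e j := by
      rw [map_sum]
      refine Finset.sum_congr rfl fun j _ => ?_
      have : (B i j : ℝ) * d j = (B i j) • d j := (Rat.smul_def _ _).symm
      rw [this, map_smul]
      simp [hc, Rat.smul_def]
    rw [← h0, hd i, map_zero]
  -- approximate coefficients
  set M : ℝ := 1 + ∑ e ∈ F, ∑ j, |(c e j : ℝ)| with hM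
  have hMpos : 0 < M := by
    have : 0 ≤ ∑ e ∈ F, ∑ j, |(c e j : ℝ)| :=
      Finset.sum_nonneg fun e _ => Finset.sum_nonneg fun j _ => abs_nonneg _
    linarith
  have hq : ∀ e : Module.Basis.ofVectorSpaceIndex ℚ ℝ, ∃ q : ℚ, |(bb e : ℝ) - q| < ε / M :=
    fun e => exists_rat_near _ (by positivity)
  choose q hqe using hq
  refine ⟨fun j => ∑ e ∈ F, q e * c e j, ?_, ?_⟩
  · intro i
    simp only []
    calc ∑ j, B i j * ∑ e ∈ F, q e * c e j
        = ∑ j, ∑ e ∈ F, q e * (B i j * c e j) := by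
          refine Finset.sum_congr rfl fun j _ => ?_
          rw [Finset.mul_sum]
          exact Finset.sum_congr rfl fun e _ => by ring
      _ = ∑ e ∈ F, q e * ∑ j, B i j * c e j := by
          rw [Finset.sum_comm]
          exact Finset.sum_congr rfl fun e _ => (Finset.mul_sum _ _ _).symm
      _ = 0 := by simp [hker]
  · intro j
    have : (↑(∑ e ∈ F, q e * c e j) : ℝ) - d j
        = ∑ e ∈ F, ((q e : ℝ) - bb e) * (c e j : ℝ) := by
      rw [hdj j]
      push_cast
      rw [← Finset.sum_sub_distrib]
      refine Finset.sum_congr rfl fun e _ => by ring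
    rw [this]
    calc |∑ e ∈ F, ((q e : ℝ) - bb e) * (c e j : ℝ)|
        ≤ ∑ e ∈ F, |((q e : ℝ) - bb e)| * |(c e j : ℝ)| := by
          refine (Finset.abs_sum_le_sum_abs _ _).trans ?_
          refine Finset.sum_le_sum fun e _ => ?_
          rw [abs_mul]
      _ ≤ ∑ e ∈ F, (ε / M) * |(c e j : ℝ)| := by
          refine Finset.sum_le_sum fun e _ => ?_
          have := (hqe e)
          have habs : |(q e : ℝ) - bb e| < ε / M := by rwa [abs_sub_comm]
          exact mul_le_mul_of_nonneg_right habs.le (abs_nonneg _)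
      _ = (ε / M) * ∑ e ∈ F, |(c e j : ℝ)| := by rw [Finset.mul_sum]
      _ < ε := by
          rw [div_mul_eq_mul_div, div_lt_iff₀ hMpos]
          have h1 : ∑ e ∈ F, |(c e j : ℝ)| ≤ ∑ e ∈ F, ∑ j', |(c e j' : ℝ)| := by
            refine Finset.sum_le_sum fun e _ => ?_
            exact Finset.single_le_sum (f := fun j' => |(c e j' : ℝ)|)
              (fun j' _ => abs_nonneg _) (Finset.mem_univ j)
          nlinarith [hε]

lemma interior_cyl {p n : ℕ} (hpn : p ≤ n) (Lx : Set (Fin p → ℝ)) :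
    interior {z : Fin n → ℝ | (fun i : Fin p => z (Fin.castLE hpn i)) ∈ Lx}
      = {z : Fin n → ℝ | (fun i : Fin p => z (Fin.castLE hpn i)) ∈ interior Lx} := by
  set f : (Fin n → ℝ) →ₗ[ℝ] (Fin p → ℝ) := LinearMap.funLeft ℝ ℝ (Fin.castLE hpn) with hf
  have hsurj : Function.Surjective f :=
    LinearMap.funLeft_surjective_of_injective ℝ ℝ _ (Fin.castLE_injective hpn)
  have hcont : Continuous f := LinearMap.continuous_of_finiteDimensional f
  have hopen : IsOpenMap f := by
    have := ContinuousLinearMap.isOpenMap (LinearMap.toContinuousLinearMap f) hsurj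
    simpa using this
  have h1 : {z : Fin n → ℝ | (fun i : Fin p => z (Fin.castLE hpn i)) ∈ Lx} = f ⁻¹' Lx := rfl
  have h2 : {z : Fin n → ℝ | (fun i : Fin p => z (Fin.castLE hpn i)) ∈ interior Lx}
      = f ⁻¹' (interior Lx) := rfl
  rw [h1, h2, hopen.preimage_interior_eq_interior_preimage hcont]

lemma key_step {p m : ℕ} (A : Fin m → Fin p → ℚ) (b : Fin m → ℚ)
    (Lx : Set (Fin p → ℝ))
    (hLxd : Lx = {x | ∀ i, ∑ j, (A i j : ℝ) * x j ≤ (b i : ℝ)})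
    (hLF : LatticeFree Lx)
    (hmax : ∀ C : Set (Fin p → ℝ), Convex ℝ C → LatticeFree C → Lx ⊆ C → C = Lx)
    (d : Fin p → ℝ) (hA : ∀ i, ∑ j, (A i j : ℝ) * d j ≤ 0)
    {w : Fin p → ℝ} (hw : w + d ∈ interior Lx) : w ∈ interior Lx := by
  classical
  set S : Fin m → ℝ := fun i => ∑ j, (A i j : ℝ) * d j with hSdef
  set C : Set (Fin p → ℝ) :=
    {x | ∀ i, S i = 0 → ∑ j, (A i j : ℝ) * x j ≤ (b i : ℝ)} with hCdef
  have hsub : Lx ⊆ C := by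
    intro x hx i _
    rw [hLxd] at hx
    exact hx i
  have hCconv : Convex ℝ C := by
    intro x hx y hy a a' ha ha' haa
    intro i hi
    have hexp : ∑ j, (A i j : ℝ) * (a • x + a' • y) j
        = a * ∑ j, (A i j : ℝ) * x j + a' * ∑ j, (A i j : ℝ) * y j := by
      rw [Finset.mul_sum, Finset.mul_sum, ← Finset.sum_add_distrib]
      refine Finset.sum_congr rfl fun j _ => ?_
      simp only [Pi.add_apply, Pi.smul_apply, smul_eq_mul]
      ring
    rw [hexp]
    calc a * ∑ j, (A i j : ℝ) * x j + a' * ∑ j, (A i j : ℝ) * y j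
        ≤ a * (b i : ℝ) + a' * (b i : ℝ) :=
          add_le_add (mul_le_mul_of_nonneg_left (hx i hi) ha)
            (mul_le_mul_of_nonneg_left (hy i hi) ha')
      _ = (b i : ℝ) := by rw [← add_mul, haa, one_mul]
  have hshift : ∀ x ∈ C, ∀ t : ℝ, x + t • d ∈ C := by
    intro x hx t i hi
    have hexp : ∑ j, (A i j : ℝ) * (x + t • d) j
        = ∑ j, (A i j : ℝ) * x j + t * S i := by
      rw [hSdef, Finset.mul_sum, ← Finset.sum_add_distrib]
      refine Finset.sum_congr rfl fun j _ => ?_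
      simp only [Pi.add_apply, Pi.smul_apply, smul_eq_mul]
      ring
    rw [hexp, hi, mul_zero, add_zero]
    exact hx i hi
  have hu : w + d ∈ interior C := interior_mono hsub hw
  have hCLF : LatticeFree C := by
    intro z hz hzint
    choose ζ hζ using hzint
    -- z is in the true interior of C
    have hzC : z ∈ interior C := by
      rw [mem_intrinsicInterior] at hz
      obtain ⟨y, hy, hyz⟩ := hz
      obtain ⟨ε, hε, hball⟩ := Metric.isOpen_iff.1 isOpen_interior y hy
      set u : Fin p → ℝ := w + d with hu'
      set δ : ℝ := ε / (2 * (‖z - u‖ + 1)) with hδ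
      have hδpos : 0 < δ := by positivity
      have hspan : z + δ • (z - u) ∈ affineSpan ℝ C := by
        have hz' : z ∈ affineSpan ℝ C := hyz ▸ y.2
        have hu'' : u ∈ affineSpan ℝ C := subset_affineSpan ℝ C (interior_subset hu)
        have := (affineSpan ℝ C).smul_vsub_vadd_mem δ hz' hu'' hz'
        simpa [vsub_eq_sub, vadd_eq_add, add_comm] using this
      have hmemC : z + δ • (z - u) ∈ C := by
        have hdist : (⟨z + δ • (z - u), hspan⟩ : affineSpan ℝ C) ∈ Metric.ball y ε := by
          rw [Metric.mem_ball, Subtype.dist_eq, hyz]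
          have h1 : dist (z + δ • (z - u)) z = δ * ‖z - u‖ := by
            rw [dist_eq_norm]
            simp [norm_smul, abs_of_pos hδpos]
          rw [h1, hδ]
          rw [div_mul_eq_mul_div, div_lt_iff₀ (by positivity)]
          nlinarith [norm_nonneg (z - u), hε]
        have h5 : (⟨z + δ • (z - u), hspan⟩ : affineSpan ℝ C) ∈ Subtype.val ⁻¹' C :=
          interior_subset (hball hdist)
        exact h5
      have hcombo : (δ/(1+δ)) • u + (1/(1+δ)) • (z + δ • (z - u)) = z := by
        have h1δ : (1:ℝ) + δ ≠ 0 := by positivity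
        funext j
        simp only [Pi.add_apply, Pi.smul_apply, Pi.sub_apply, smul_eq_mul]
        field_simp
        ring
      have hcm := hCconv.combo_interior_closure_mem_interior (x := u)
        (y := z + δ • (z - u)) (a := δ/(1+δ)) (b := 1/(1+δ)) hu (subset_closure hmemC)
        (by positivity) (by positivity) (by field_simp; ring)
      rwa [hcombo] at hcm
    obtain ⟨ε1, hε1, hball1⟩ := Metric.isOpen_iff.1 isOpen_interior z hzC
    -- rational approximation of d within the kernel of the tight rows
    set ε2cand : Fin m → ℝ :=
      fun i => if S i < 0 then (-(S i)) / (2 * (1 + ∑ j, |(A i j : ℝ)|)) else 1 with hε2cand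
    set Eset : Finset ℝ := insert 1 (Finset.univ.image ε2cand) with hEset
    have hEne : Eset.Nonempty := ⟨1, Finset.mem_insert_self _ _⟩
    set ε2 : ℝ := Eset.min' hEne with hε2
    have habs_nonneg : ∀ i : Fin m, (0:ℝ) ≤ ∑ j, |(A i j : ℝ)| :=
      fun i => Finset.sum_nonneg fun j _ => abs_nonneg _
    have hε2pos : 0 < ε2 := by
      apply (Finset.lt_min'_iff _ _).2
      intro y hy
      rcases Finset.mem_insert.1 hy with rfl | hy
      · norm_num
      · obtain ⟨i, _, rfl⟩ := Finset.mem_image.1 hy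
        dsimp only [ε2cand]
        split_ifs with h
        · have := habs_nonneg i
          have h2 : (0:ℝ) < -(S i) := by linarith
          positivity
        · norm_num
    have hε2le : ∀ i, S i < 0 → ε2 ≤ (-(S i)) / (2 * (1 + ∑ j, |(A i j : ℝ)|)) := by
      intro i hi
      have h7 := Finset.min'_le Eset (ε2cand i)
        (Finset.mem_insert_of_mem (Finset.mem_image_of_mem _ (Finset.mem_univ i)))
      have h6 : ε2cand i = -S i / (2 * (1 + ∑ j, |(A i j : ℝ)|)) := by
        rw [hε2cand]
        simp [hi]
      exact le_of_le_of_eq h7 h6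
    obtain ⟨h, hker, happ⟩ := rat_kernel_approx (fun (i : {i : Fin m // S i = 0}) => A i.1) d
      (fun i => i.2) hε2pos
    have hstrict : ∀ i, S i < 0 → ∑ j, (A i j : ℝ) * (h j : ℝ) < 0 := by
      intro i hi
      have hsplit : ∑ j, (A i j : ℝ) * (h j : ℝ)
          = S i + ∑ j, (A i j : ℝ) * ((h j : ℝ) - d j) := by
        rw [hSdef, ← Finset.sum_add_distrib]
        exact Finset.sum_congr rfl fun j _ => by ring
      have hb1 : ∑ j, (A i j : ℝ) * ((h j : ℝ) - d j) ≤ ∑ j, |(A i j : ℝ)| * ε2 := by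
        refine Finset.sum_le_sum fun j _ => ?_
        calc (A i j : ℝ) * ((h j : ℝ) - d j) ≤ |(A i j : ℝ) * ((h j : ℝ) - d j)| := le_abs_self _
          _ = |(A i j : ℝ)| * |(h j : ℝ) - d j| := abs_mul _ _
          _ ≤ |(A i j : ℝ)| * ε2 := mul_le_mul_of_nonneg_left (happ j).le (abs_nonneg _)
      have hb2 : ∑ j, |(A i j : ℝ)| * ε2 = (∑ j, |(A i j : ℝ)|) * ε2 :=
        (Finset.sum_mul _ _ _).symm
      have hσ := habs_nonneg i
      have hd2 : (0:ℝ) < 2 * (1 + ∑ j, |(A i j : ℝ)|) := by linarith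
      have h5 : ε2 * (2 * (1 + ∑ j, |(A i j : ℝ)|)) ≤ -S i := by
        rw [← le_div_iff₀ hd2]
        exact hε2le i hi
      have h6 : (∑ j, |(A i j : ℝ)|) * ε2 ≤ -S i / 2 := by nlinarith [hε2pos.le, hσ]
      have h8 := hb1.trans (le_of_eq hb2)
      rw [hsplit]
      nlinarith
    -- integer direction vector
    set M : ℕ := ∏ j, (h j).den with hMdef
    have hMpos : 0 < M := Finset.prod_pos fun j _ => (h j).pos
    have hint : ∀ j, ∃ gz : ℤ, (h j) * (M : ℚ) = (gz : ℚ) := by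
      intro j
      obtain ⟨c, hc⟩ := Finset.dvd_prod_of_mem (fun j => (h j).den) (Finset.mem_univ j)
      refine ⟨(h j).num * c, ?_⟩
      rw [hMdef, hc]
      push_cast
      rw [← mul_assoc, Rat.mul_den_eq_num]
    choose g hg using hint
    set G : Fin m → ℝ := fun i => ∑ j, (A i j : ℝ) * (g j : ℝ) with hGdef
    have hgcast : ∀ j, ((g j : ℤ) : ℝ) = (h j : ℝ) * (M : ℝ) := by
      intro j
      have h9 := congrArg (fun q : ℚ => (q : ℝ)) (hg j)
      push_cast at h9
      linarith [h9]
    have hGeq : ∀ i, G i = (∑ j, (A i j : ℝ) * (h j : ℝ)) * (M : ℝ) := by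
      intro i
      rw [hGdef, Finset.sum_mul]
      refine Finset.sum_congr rfl fun j _ => ?_
      rw [hgcast j]
      ring
    have hgzero : ∀ i, S i = 0 → G i = 0 := by
      intro i hi
      rw [hGeq]
      have hQ : ∑ j, (A i j : ℝ) * (h j : ℝ) = 0 := by
        have := hker ⟨i, hi⟩
        have := congrArg (fun q : ℚ => (q : ℝ)) this
        push_cast at this
        simpa using this
      rw [hQ, zero_mul]
    have hgneg : ∀ i, S i < 0 → G i < 0 := by
      intro i hi
      rw [hGeq]
      have hM' : (0:ℝ) < (M : ℝ) := by exact_mod_cast hMpos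
      exact mul_neg_of_neg_of_pos (hstrict i hi) hM'
    -- choice of the shift multiple k
    set T : Fin m → ℝ := fun i => ∑ j, (A i j : ℝ) * z j + ε1 * ∑ j, |(A i j : ℝ)| with hTdef
    set kf : Fin m → ℕ := fun i => if S i < 0 then ⌈(T i - b i) / (-(G i))⌉₊ else 0 with hkf
    set k : ℕ := Finset.univ.sup kf with hk'
    have hk : ∀ i, S i < 0 → T i - (b i : ℝ) ≤ (k : ℝ) * (-(G i)) := by
      intro i hi
      have h1 : (T i - b i) / (-(G i)) ≤ (kf i : ℝ) := by
        rw [hkf]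
        simp only [hi, if_true]
        exact Nat.le_ceil _
      have h2 : ((kf i : ℕ) : ℝ) ≤ (k : ℝ) :=
        Nat.cast_le.2 (Finset.le_sup (Finset.mem_univ i))
      have hGpos : 0 < -(G i) := by linarith [hgneg i hi]
      rw [div_le_iff₀ hGpos] at h1
      nlinarith
    -- the shifted ball is inside Lx
    set gr : Fin p → ℝ := fun j => (g j : ℝ) with hgr
    set z' : Fin p → ℝ := z + (k : ℝ) • gr with hz'
    have hballLx : Metric.ball z' ε1 ⊆ Lx := by
      intro y hy
      set w0 : Fin p → ℝ := y - (k : ℝ) • gr with hw0def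
      have hw0 : w0 ∈ Metric.ball z ε1 := by
        rw [Metric.mem_ball] at hy ⊢
        have : w0 - z = y - z' := by
          rw [hw0def, hz']
          abel
        rw [dist_eq_norm, this, ← dist_eq_norm]
        exact hy
      have hw0C : w0 ∈ C := interior_subset (hball1 hw0)
      rw [hLxd]
      intro i
      have hsum : ∑ j, (A i j : ℝ) * y j = ∑ j, (A i j : ℝ) * w0 j + (k : ℝ) * G i := by
        rw [hGdef, Finset.mul_sum, ← Finset.sum_add_distrib]
        refine Finset.sum_congr rfl fun j _ => ?_
        have : y j = w0 j + (k : ℝ) * (g j : ℝ) := by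
          rw [hw0def]
          simp [hgr]
        rw [this]
        ring
      rcases eq_or_lt_of_le (hA i) with hi | hi
      · have hi' : S i = 0 := hi
        rw [hsum, hgzero i hi', mul_zero, add_zero]
        exact hw0C i hi'
      · have hbound : ∑ j, (A i j : ℝ) * w0 j ≤ T i := by
          have hsplit2 : ∑ j, (A i j : ℝ) * w0 j
              = ∑ j, (A i j : ℝ) * z j + ∑ j, (A i j : ℝ) * (w0 j - z j) := by
            rw [← Finset.sum_add_distrib]
            exact Finset.sum_congr rfl fun j _ => by ring
          have hb3 : ∑ j, (A i j : ℝ) * (w0 j - z j) ≤ ∑ j, |(A i j : ℝ)| * ε1 := by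
            refine Finset.sum_le_sum fun j _ => ?_
            have hdj : |w0 j - z j| ≤ ε1 := by
              have := dist_le_pi_dist w0 z j
              rw [Real.dist_eq] at this
              have h2 := Metric.mem_ball.1 hw0
              calc |w0 j - z j| ≤ dist w0 z := this
                _ ≤ ε1 := h2.le
            calc (A i j : ℝ) * (w0 j - z j) ≤ |(A i j : ℝ) * (w0 j - z j)| := le_abs_self _
              _ = |(A i j : ℝ)| * |w0 j - z j| := abs_mul _ _
              _ ≤ |(A i j : ℝ)| * ε1 := mul_le_mul_of_nonneg_left hdj (abs_nonneg _)
          rw [hsplit2, hTdef]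
          simp only []
          have : ∑ j, |(A i j : ℝ)| * ε1 = ε1 * ∑ j, |(A i j : ℝ)| := by
            rw [Finset.mul_sum]
            exact Finset.sum_congr rfl fun j _ => by ring
          linarith [hb3.trans (le_of_eq this)]
        rw [hsum]
        have := hk i hi
        linarith
    have hz'int : z' ∈ interior Lx :=
      interior_maximal hballLx Metric.isOpen_ball (Metric.mem_ball_self hε1)
    refine hLF z' (interior_subset_intrinsicInterior hz'int) fun j => ⟨ζ j + k * g j, ?_⟩
    rw [hz']
    simp only [Pi.add_apply, Pi.smul_apply, smul_eq_mul, hgr]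
    rw [hζ j]
    push_cast
    ring
  have hCeq : C = Lx := hmax C hCconv hCLF hsub
  -- translate back
  have himg : (fun x => x + (-d)) '' interior C ⊆ C := by
    rintro _ ⟨x, hx, rfl⟩
    have := hshift x (interior_subset hx) (-1)
    simpa [neg_one_smul] using this
  have hopen : IsOpen ((fun x => x + (-d)) '' interior C) :=
    (isOpenMap_add_right (-d)) _ isOpen_interior
  have : (fun x => x + (-d)) '' interior C ⊆ interior C := interior_maximal himg hopen
  have hwmem : w ∈ interior C := by
    have : w + d + (-d) ∈ interior C := this ⟨w + d, hu, rfl⟩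
    simpa using this
  rwa [hCeq] at hwmem


/-- Lemma `int_vert_nec`: `R(L,P) ≠ P` iff some vertex of `P` lies in the
interior of `L`. -/
theorem stmt3 {p n : ℕ} (hpn : p ≤ n) {V E : Type*} [Fintype V] [Fintype E]
    (v : V → Fin n → ℝ) (r : E → Fin n → ℝ)
    (hvQ : ∀ i k, ∃ q : ℚ, v i k = (q : ℝ))
    (hrZ : ∀ j k, ∃ z : ℤ, r j k = (z : ℝ))
    (P : Set (Fin n → ℝ))
    (hP : P = convexHull ℝ (Set.range v) +
      {d | ∃ μ : E → ℝ, (∀ j, 0 ≤ μ j) ∧ d = ∑ j, μ j • r j})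
    (hvert : ∀ i, v i ∈ Set.extremePoints ℝ P)
    (L : Set (Fin n → ℝ)) (hL : IsMISplit hpn L) :
    convexHull ℝ {x ∈ P | x ∉ interior L} ≠ P ↔ ∃ i, v i ∈ interior L := by
  classical
  obtain ⟨Lx, ⟨⟨m, A, b, hALx⟩, hLF, hmax⟩, hLdef⟩ := hL
  set K : Set (Fin n → ℝ) := {d | ∃ μ : E → ℝ, (∀ j, 0 ≤ μ j) ∧ d = ∑ j, μ j • r j} with hK
  have hKadd : ∀ x ∈ K, ∀ y ∈ K, x + y ∈ K := by
    rintro x ⟨μ1, hμ1, rfl⟩ y ⟨μ2, hμ2, rfl⟩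
    refine ⟨μ1 + μ2, fun j => add_nonneg (hμ1 j) (hμ2 j), ?_⟩
    rw [← Finset.sum_add_distrib]
    refine Finset.sum_congr rfl fun j _ => ?_
    simp [add_smul]
  have hKsmul : ∀ (t : ℝ), 0 ≤ t → ∀ x ∈ K, t • x ∈ K := by
    rintro t ht x ⟨μ, hμ, rfl⟩
    refine ⟨t • μ, fun j => mul_nonneg ht (hμ j), ?_⟩
    rw [Finset.smul_sum]
    refine Finset.sum_congr rfl fun j _ => ?_
    simp [smul_smul]
  have hKconv : Convex ℝ K := by
    intro x hx y hy a a' ha ha' _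
    exact hKadd _ (hKsmul a ha x hx) _ (hKsmul a' ha' y hy)
  have hPconv : Convex ℝ P := hP ▸ (convex_convexHull ℝ _).add hKconv
  have hvP : ∀ i, v i ∈ P := fun i => (hvert i).1
  have hintL : interior L
      = {z : Fin n → ℝ | (fun i : Fin p => z (Fin.castLE hpn i)) ∈ interior Lx} := by
    rw [hLdef, interior_cyl hpn]
  set π : (Fin n → ℝ) → (Fin p → ℝ) := fun z => fun i : Fin p => z (Fin.castLE hpn i) with hπ
  have hmemint : ∀ zz : Fin n → ℝ, zz ∈ interior L ↔ π zz ∈ interior Lx := by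
    intro zz
    rw [hintL]
    exact Iff.rfl
  constructor
  · -- hard direction
    intro hne
    by_contra hno
    push_neg at hno
    apply hne
    apply Set.Subset.antisymm
    · exact convexHull_min (fun x hx => hx.1) hPconv
    · intro x hx
      rw [hP, Set.mem_add] at hx
      obtain ⟨a, ha, dd, hdd, hadd⟩ := hx
      have claim : ∀ w0 ∈ P, w0 ∉ interior L →
          w0 + dd ∈ convexHull ℝ {x ∈ P | x ∉ interior L} := by
        intro w0 hw0P hw0
        have hPadd : ∀ t : ℝ, 0 ≤ t → w0 + t • dd ∈ P := by
          intro t ht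
          rw [hP, Set.mem_add] at hw0P ⊢
          obtain ⟨a0, ha0, d0, hd0, h0⟩ := hw0P
          refine ⟨a0, ha0, d0 + t • dd, hKadd _ hd0 _ (hKsmul t ht dd hdd), ?_⟩
          rw [← h0]
          abel
        by_cases hcase : w0 + dd ∈ interior L
        · have hesc : ∃ t : ℝ, 1 ≤ t ∧ w0 + t • dd ∉ interior L := by
            by_contra hc
            push_neg at hc
            have hAle : ∀ i, ∑ j, (A i j : ℝ) * (π dd) j ≤ 0 := by
              intro i
              by_contra hpos
              push_neg at hpos
              set Sd : ℝ := ∑ j, (A i j : ℝ) * (π dd) j with hSd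
              set Sw : ℝ := ∑ j, (A i j : ℝ) * (π w0) j with hSw
              set t : ℝ := max 1 (((b i : ℝ) - Sw + 1) / Sd) with htdef
              have ht1 : 1 ≤ t := le_max_left _ _
              have hmem := hc t ht1
              have hin : π (w0 + t • dd) ∈ interior Lx := (hmemint _).1 hmem
              have hLxmem : π (w0 + t • dd) ∈ Lx := interior_subset hin
              rw [hALx] at hLxmem
              have hi := hLxmem i
              have hexp : ∑ j, (A i j : ℝ) * (π (w0 + t • dd)) j = Sw + t * Sd := by
                rw [hSw, hSd, Finset.mul_sum, ← Finset.sum_add_distrib]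
                refine Finset.sum_congr rfl fun j _ => ?_
                simp only [hπ, Pi.add_apply, Pi.smul_apply, smul_eq_mul]
                ring
              rw [hexp] at hi
              have ht2 : ((b i : ℝ) - Sw + 1) / Sd ≤ t := le_max_right _ _
              have ht3 : (b i : ℝ) - Sw + 1 ≤ t * Sd := (div_le_iff₀ hpos).mp ht2
              linarith
            have hwd : π w0 + π dd ∈ interior Lx := (hmemint _).1 hcase
            have := key_step A b Lx hALx hLF hmax (π dd) hAle hwd
            exact hw0 ((hmemint w0).2 this)
          obtain ⟨t, ht1, htout⟩ := hesc
          have ht0 : (0:ℝ) < t := lt_of_lt_of_le one_pos ht1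
          have hyS : w0 + t • dd ∈ {x ∈ P | x ∉ interior L} := ⟨hPadd t ht0.le, htout⟩
          have hwS : w0 ∈ {x ∈ P | x ∉ interior L} := ⟨hw0P, hw0⟩
          have h1t : 1 / t ≤ 1 := by
            rw [div_le_one ht0]
            exact ht1
          have hcomb := (convex_convexHull ℝ {x ∈ P | x ∉ interior L})
            (subset_convexHull ℝ _ hwS) (subset_convexHull ℝ _ hyS)
            (a := 1 - 1/t) (b := 1/t) (by linarith) (by positivity) (by ring)
          have heq2 : w0 + dd = (1 - 1/t) • w0 + (1/t) • (w0 + t • dd) := by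
            funext j
            simp only [Pi.add_apply, Pi.smul_apply, smul_eq_mul]
            have htne : t ≠ 0 := ne_of_gt ht0
            field_simp
            try ring
          rw [heq2]
          exact hcomb
        · refine subset_convexHull ℝ _ ⟨?_, hcase⟩
          have := hPadd 1 zero_le_one
          simpa using this
      have hT : ∀ i, v i + dd ∈ convexHull ℝ {x ∈ P | x ∉ interior L} :=
        fun i => claim (v i) (hvP i) (hno i)
      have hTT : a ∈ {y : Fin n → ℝ | y + dd ∈ convexHull ℝ {x ∈ P | x ∉ interior L}} := by
        refine convexHull_min ?_ ?_ ha
        · rintro y ⟨i, rfl⟩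
          exact hT i
        · intro y1 hy1 y2 hy2 c1 c2 hc1 hc2 hcc
          show (c1 • y1 + c2 • y2) + dd ∈ convexHull ℝ {x ∈ P | x ∉ interior L}
          have heq3 : (c1 • y1 + c2 • y2) + dd = c1 • (y1 + dd) + c2 • (y2 + dd) := by
            funext j
            simp only [Pi.add_apply, Pi.smul_apply, smul_eq_mul]
            linear_combination (dd j) * hcc.symm
          rw [heq3]
          exact (convex_convexHull ℝ _) hy1 hy2 hc1 hc2 hcc
      have hfin : a + dd ∈ convexHull ℝ {x ∈ P | x ∉ interior L} := hTT
      rwa [hadd] at hfin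
  · -- easy direction
    rintro ⟨i, hi⟩ heq
    have hv := hvert i
    rw [← heq] at hv
    exact (extremePoints_convexHull_subset hv).2 hi
end

section
/- Let δ^T x ≥ δ₀ be a non-negative cut for P, let V^c = {i ∈ V : δ^T v^i < δ₀}, V^s = V \ V^c, and fix k ∈ V^s with δ^T v^k > δ₀. For any convex combination λ^c supported on V^c with v_{λ^c} = Σ_{i∈V^c} λ^c_i v^i, the point v_{λ^c} + β'(λ^c)(v^k − v_{λ^c}) where β'(λ^c) = (δ₀ − δ^T v_{λ^c})/(δ^T(v^k − v_{λ^c})) is a convex combination of the points v^i + β'_i (v^k − v^i), i ∈ V^c, where β'_i = (δ₀ − δ^T v^i)/(δ^T(v^k − v^i)). -/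
open Pointwise

/-- Lemma `beta_prime_properties`: the intersection point obtained from a
convex combination `λ^c` supported on the cut-off vertices is a convex
combination of the intersection points obtained from the cut-off vertices
themselves. -/
theorem stmt5 {n : ℕ} {V E : Type*} [Fintype V] [Fintype E]
    (v : V → Fin n → ℝ) (r : E → Fin n → ℝ)
    (δ : Fin n → ℝ) (δ0 : ℝ)
    (hnn : ∀ j, 0 ≤ ∑ t, δ t * r j t)
    (Vc : Set V) (hVc : Vc = {i | ∑ t, δ t * v i t < δ0})
    (k : V) (hk : δ0 < ∑ t, δ t * v k t)
    (lam : V → ℝ) (hlam0 : ∀ i, 0 ≤ lam i)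
    (hsupp : ∀ i ∉ Vc, lam i = 0) (hsum : ∑ i, lam i = 1) :
    (∑ i, lam i • v i) +
        ((δ0 - ∑ t, δ t * (∑ i, lam i • v i) t) /
            (∑ t, δ t * (v k t - (∑ i, lam i • v i) t))) •
          (v k - ∑ i, lam i • v i) ∈
      convexHull ℝ {y | ∃ i ∈ Vc,
        y = v i + ((δ0 - ∑ t, δ t * v i t) / (∑ t, δ t * (v k t - v i t))) • (v k - v i)} := by
  classical
  -- linearity of the linear form over differences
  have hF : ∀ x y : Fin n → ℝ,
      (∑ t, δ t * (x t - y t)) = (∑ t, δ t * x t) - (∑ t, δ t * y t) := by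
    intro x y
    rw [← Finset.sum_sub_distrib]
    exact Finset.sum_congr rfl fun t _ => by ring
  set vl : Fin n → ℝ := ∑ i, lam i • v i with hvl
  have hvlap : ∀ s, vl s = ∑ i, lam i * v i s := by
    intro s
    rw [hvl]
    simp [Finset.sum_apply]
  have hFvl : (∑ t, δ t * vl t) = ∑ i, lam i * (∑ t, δ t * v i t) := by
    simp only [hvlap, Finset.mul_sum]
    rw [Finset.sum_comm]
    exact Finset.sum_congr rfl fun i _ => Finset.sum_congr rfl fun t _ => by ring
  have hle : (∑ t, δ t * vl t) ≤ δ0 := by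
    rw [hFvl]
    calc ∑ i, lam i * (∑ t, δ t * v i t) ≤ ∑ i, lam i * δ0 := by
          apply Finset.sum_le_sum
          intro i _
          by_cases h : lam i = 0
          · simp [h]
          · have hiVc : i ∈ Vc := by
              by_contra hc; exact h (hsupp i hc)
            rw [hVc] at hiVc
            exact mul_le_mul_of_nonneg_left (le_of_lt hiVc) (hlam0 i)
      _ = δ0 := by rw [← Finset.sum_mul, hsum, one_mul]
  set D : ℝ := (∑ t, δ t * v k t) - (∑ t, δ t * vl t) with hD
  have hDpos : 0 < D := by rw [hD]; linarith
  have hden : (∑ t, δ t * (v k t - vl t)) = D := by rw [hF, hD]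
  rw [hden]
  set μ : V → ℝ := fun i =>
    lam i * ((∑ t, δ t * v k t) - (∑ t, δ t * v i t)) / D with hμ
  set t0 : Finset V := Finset.univ.filter (fun i => lam i ≠ 0) with ht0
  have hmem : ∀ i ∈ t0, i ∈ Vc := by
    intro i hi
    rw [ht0, Finset.mem_filter] at hi
    by_contra hc
    exact hi.2 (hsupp i hc)
  have hci : ∀ i ∈ t0, 0 < (∑ t, δ t * v k t) - (∑ t, δ t * v i t) := by
    intro i hi
    have := hmem i hi
    rw [hVc] at this
    have : (∑ t, δ t * v i t) < δ0 := this
    linarith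
  have hμ0 : ∀ i ∈ t0, 0 ≤ μ i := by
    intro i hi
    rw [hμ]
    exact div_nonneg (mul_nonneg (hlam0 i) (le_of_lt (hci i hi))) (le_of_lt hDpos)
  have hμext : ∑ i ∈ t0, μ i = ∑ i, μ i := by
    apply Finset.sum_subset (Finset.subset_univ t0)
    intro i _ hi
    rw [ht0, Finset.mem_filter] at hi
    push_neg at hi
    have h0 : lam i = 0 := hi (Finset.mem_univ i)
    rw [hμ]; simp [h0]
  have hμsum : ∑ i ∈ t0, μ i = 1 := by
    rw [hμext]
    have : ∑ i, μ i =
        (∑ i, (lam i * (∑ t, δ t * v k t) - lam i * (∑ t, δ t * v i t))) / D := by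
      rw [Finset.sum_div]
      exact Finset.sum_congr rfl fun i _ => by rw [hμ]; ring
    rw [this, Finset.sum_sub_distrib, ← Finset.sum_mul, hsum, one_mul, ← hFvl, ← hD,
      div_self (ne_of_gt hDpos)]
  -- the key vector identity
  have key : vl + ((δ0 - ∑ t, δ t * vl t) / D) • (v k - vl) =
      ∑ i ∈ t0, μ i • (v i +
        ((δ0 - ∑ t, δ t * v i t) / (∑ t, δ t * (v k t - v i t))) • (v k - v i)) := by
    funext s
    have hterm : ∀ i ∈ t0,
        (μ i • (v i +
          ((δ0 - ∑ t, δ t * v i t) / (∑ t, δ t * (v k t - v i t))) • (v k - v i))) s =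
        lam i * (((∑ t, δ t * v k t) - δ0) * v i s +
          (δ0 - ∑ t, δ t * v i t) * v k s) / D := by
      intro i hi
      have hc := hci i hi
      simp only [Pi.smul_apply, Pi.add_apply, Pi.sub_apply, smul_eq_mul, hF, hμ]
      field_simp
      ring
    rw [Finset.sum_apply]
    rw [Finset.sum_congr rfl hterm]
    have hext : ∑ i ∈ t0, lam i * (((∑ t, δ t * v k t) - δ0) * v i s +
          (δ0 - ∑ t, δ t * v i t) * v k s) / D =
        ∑ i, lam i * (((∑ t, δ t * v k t) - δ0) * v i s +
          (δ0 - ∑ t, δ t * v i t) * v k s) / D := by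
      apply Finset.sum_subset (Finset.subset_univ t0)
      intro i _ hi
      rw [ht0, Finset.mem_filter] at hi
      push_neg at hi
      have h0 : lam i = 0 := hi (Finset.mem_univ i)
      simp [h0]
    rw [hext]
    have hsplit : ∑ i, lam i * (((∑ t, δ t * v k t) - δ0) * v i s +
          (δ0 - ∑ t, δ t * v i t) * v k s) / D =
        ((((∑ t, δ t * v k t) - δ0) * (∑ i, lam i * v i s)) +
          (δ0 * (∑ i, lam i) - (∑ i, lam i * (∑ t, δ t * v i t))) * v k s) / D := by
      rw [← Finset.sum_div]
      congr 1
      have h1 : ∀ i ∈ (Finset.univ : Finset V),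
          lam i * (((∑ t, δ t * v k t) - δ0) * v i s +
            (δ0 - ∑ t, δ t * v i t) * v k s) =
          ((∑ t, δ t * v k t) - δ0) * (lam i * v i s) +
            (lam i * δ0 - lam i * (∑ t, δ t * v i t)) * v k s := fun i _ => by ring
      rw [Finset.sum_congr rfl h1, Finset.sum_add_distrib, ← Finset.mul_sum, ← Finset.sum_mul,
        Finset.sum_sub_distrib, ← Finset.sum_mul]
      ring
    rw [hsplit, hsum, ← hvlap, ← hFvl]
    simp only [Pi.add_apply, Pi.smul_apply, Pi.sub_apply, smul_eq_mul]
    have hDne : D ≠ 0 := ne_of_gt hDpos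
    rw [eq_div_iff hDne, add_mul, mul_assoc, mul_comm (v k s - vl s) D, ← mul_assoc,
      div_mul_cancel₀ _ hDne]
    linear_combination (vl s) * hD
  rw [key]
  apply (convex_convexHull ℝ _).sum_mem hμ0 hμsum
  intro i hi
  apply subset_convexHull
  exact ⟨i, hmem i hi, rfl⟩
end

section
/- Let δ^T x ≥ δ₀ be a non-negative cut for P. Every vertex of Q = {x ∈ P : δ^T x ≥ δ₀} is of one of three forms: (i) a vertex v^k of P with δ^T v^k ≥ δ₀; (ii) an intersection point v^i + β'_{i,k}(v^k − v^i) on the hyperplane δ^T x = δ₀, where δ^T v^i < δ₀ and δ^T v^k ≥ δ₀; (iii) an intersection point v^i + α'_{i,j} r^j on the hyperplane δ^T x = δ₀, where δ^T v^i < δ₀ and j ∈ E with δ^T r^j > 0. -/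
open Pointwise

lemma exists_ker3 (p q : Fin 3 → ℝ) :
    ∃ y : Fin 3 → ℝ, y ≠ 0 ∧ (∑ i, y i * p i) = 0 ∧ (∑ i, y i * q i) = 0 := by
  let f : (Fin 3 → ℝ) →ₗ[ℝ] ℝ × ℝ :=
    { toFun := fun y => (∑ i, y i * p i, ∑ i, y i * q i)
      map_add' := by
        intro y z
        simp [add_mul, Finset.sum_add_distrib, Prod.ext_iff]
      map_smul' := by
        intro c y
        simp [Finset.mul_sum, Prod.ext_iff, mul_assoc] }
  have hker : LinearMap.ker f ≠ ⊥ := by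
    intro h
    have hinj : Function.Injective f := LinearMap.ker_eq_bot.mp h
    have hle := LinearMap.finrank_le_finrank_of_injective hinj
    rw [Module.finrank_pi] at hle
    simp [Module.finrank_prod] at hle
  obtain ⟨y, hy, hy0⟩ := (Submodule.ne_bot_iff _).mp hker
  have h1 : (∑ i, y i * p i, ∑ i, y i * q i) = ((0 : ℝ), (0 : ℝ)) := hy
  exact ⟨y, hy0, (Prod.ext_iff.mp h1).1, (Prod.ext_iff.mp h1).2⟩

lemma sum_eq_one' {ι M : Type*} [Fintype ι] [AddCommMonoid M] {s1 : ι} (f : ι → M)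
    (hf : ∀ s, s ≠ s1 → f s = 0) : ∑ s, f s = f s1 :=
  Finset.sum_eq_single s1 (fun b _ hb => hf b hb) (fun h => absurd (Finset.mem_univ s1) h)

lemma sum_eq_two {ι M : Type*} [Fintype ι] [DecidableEq ι] [AddCommMonoid M] {s1 s2 : ι}
    (h12 : s1 ≠ s2) (f : ι → M) (hf : ∀ s, s ≠ s1 → s ≠ s2 → f s = 0) :
    ∑ s, f s = f s1 + f s2 := by
  rw [← Finset.sum_subset (Finset.subset_univ ({s1, s2} : Finset ι))
    (fun x _ hx => by
      simp only [Finset.mem_insert, Finset.mem_singleton, not_or] at hx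
      exact hf x hx.1 hx.2)]
  rw [Finset.sum_insert (by simp [h12]), Finset.sum_singleton]

lemma sum_eq_three {ι M : Type*} [Fintype ι] [DecidableEq ι] [AddCommMonoid M] {s1 s2 s3 : ι}
    (h12 : s1 ≠ s2) (h13 : s1 ≠ s3) (h23 : s2 ≠ s3) (f : ι → M)
    (hf : ∀ s, s ≠ s1 → s ≠ s2 → s ≠ s3 → f s = 0) :
    ∑ s, f s = f s1 + f s2 + f s3 := by
  rw [← Finset.sum_subset (Finset.subset_univ ({s1, s2, s3} : Finset ι))
    (fun x _ hx => by
      simp only [Finset.mem_insert, Finset.mem_singleton, not_or] at hx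
      exact hf x hx.1 hx.2.1 hx.2.2)]
  rw [Finset.sum_insert (by simp [h12, h13]), Finset.sum_insert (by simp [h23]),
    Finset.sum_singleton, add_assoc]

set_option maxHeartbeats 2000000 in
/-- Lemma `vert_prime_char`: every vertex of `{x ∈ P : δ^T x ≥ δ₀}` is a
satisfied vertex of `P` or an intersection point associated with a cut-off
vertex of `P`. -/
theorem stmt6 {n : ℕ} {V E : Type*} [Fintype V] [Fintype E]
    (v : V → Fin n → ℝ) (r : E → Fin n → ℝ)
    (P : Set (Fin n → ℝ))
    (hP : P = convexHull ℝ (Set.range v) +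
      {d | ∃ μ : E → ℝ, (∀ j, 0 ≤ μ j) ∧ d = ∑ j, μ j • r j})
    (δ : Fin n → ℝ) (δ0 : ℝ)
    (hnn : ∀ j, 0 ≤ ∑ t, δ t * r j t)
    (hcut : ∃ i, ∑ t, δ t * v i t < δ0)
    (Q : Set (Fin n → ℝ)) (hQ : Q = {x ∈ P | δ0 ≤ ∑ t, δ t * x t}) :
    ∀ x ∈ Set.extremePoints ℝ Q,
      (∃ k, δ0 ≤ ∑ t, δ t * v k t ∧ x = v k) ∨
      (∃ i k, (∑ t, δ t * v i t < δ0) ∧ δ0 ≤ ∑ t, δ t * v k t ∧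
        x = v i + ((δ0 - ∑ t, δ t * v i t) / (∑ t, δ t * (v k t - v i t))) • (v k - v i)) ∨
      (∃ i j, (∑ t, δ t * v i t < δ0) ∧ 0 < ∑ t, δ t * r j t ∧
        x = v i + ((δ0 - ∑ t, δ t * v i t) / (∑ t, δ t * r j t)) • r j) := by
  classical
  subst hQ
  intro x hx
  obtain ⟨hxQ, hext⟩ := mem_extremePoints.mp hx
  obtain ⟨hxP, hxδ⟩ := hxQ
  -- unified coefficient setup over V ⊕ E
  set w : V ⊕ E → Fin n → ℝ := Sum.elim v r with hw_def
  set χ : V ⊕ E → ℝ := Sum.elim (fun _ => 1) (fun _ => 0) with hχ_def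
  set a : V ⊕ E → ℝ := fun s => ∑ t, δ t * w s t with ha_def
  have ha_inl : ∀ i, a (Sum.inl i) = ∑ t, δ t * v i t := fun i => by simp [ha_def, hw_def]
  have ha_inr : ∀ j, a (Sum.inr j) = ∑ t, δ t * r j t := fun j => by simp [ha_def, hw_def]
  -- dot-product computation
  have hdot : ∀ κ : V ⊕ E → ℝ,
      (∑ t, δ t * (∑ s, κ s • w s) t) = ∑ s, κ s * a s := by
    intro κ
    simp only [ha_def, Finset.sum_apply, Pi.smul_apply, smul_eq_mul, Finset.mul_sum]
    rw [Finset.sum_comm]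
    exact Finset.sum_congr rfl fun s _ => Finset.sum_congr rfl fun t _ => by ring
  -- membership in P from coefficients
  have hmemP : ∀ κ : V ⊕ E → ℝ, (∀ s, 0 ≤ κ s) → (∑ s, κ s * χ s) = 1 →
      (∑ s, κ s • w s) ∈ P := by
      intro κ h0 h1
      have hsplit : (∑ s, κ s • w s) =
          (∑ i, κ (Sum.inl i) • v i) + (∑ j, κ (Sum.inr j) • r j) := by
        rw [Fintype.sum_sum_type]
        simp [hw_def]
      have h1' : (∑ i, κ (Sum.inl i)) = 1 := by
        rw [Fintype.sum_sum_type] at h1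
        simpa [hχ_def] using h1
      rw [hsplit, hP]
      refine Set.add_mem_add ?_ ⟨fun j => κ (Sum.inr j), fun j => h0 _, rfl⟩
      have := Finset.centerMass_mem_convexHull (Finset.univ)
        (w := fun i => κ (Sum.inl i)) (fun i _ => h0 _) (by rw [h1']; norm_num)
        (z := v) (fun i _ => Set.mem_range_self i)
      rwa [Finset.centerMass_eq_of_sum_1 _ _ h1'] at this
  -- a representation of x exists
  have hrep : ∃ κ : V ⊕ E → ℝ, (∀ s, 0 ≤ κ s) ∧ (∑ s, κ s * χ s) = 1 ∧
      (∑ s, κ s • w s) = x := by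
      rw [hP, Set.mem_add] at hxP
      obtain ⟨c, hc, d, ⟨μ, hμ0, rfl⟩, hcd⟩ := hxP
      rw [convexHull_range_eq_exists_affineCombination] at hc
      obtain ⟨sf, wf, hwf0, hwf1, hcomb⟩ := hc
      rw [Finset.affineCombination_eq_linear_combination _ _ _ hwf1] at hcomb
      refine ⟨Sum.elim (fun i => if i ∈ sf then wf i else 0) μ, ?_, ?_, ?_⟩
      · rintro (i | j)
        · simp only [Sum.elim_inl]
          split
          · exact hwf0 _ ‹_›
          · exact le_refl 0
        · exact hμ0 j
      · rw [Fintype.sum_sum_type]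
        simp only [hχ_def, Sum.elim_inl, Sum.elim_inr, mul_one, mul_zero, Finset.sum_const_zero,
          add_zero]
        rw [Finset.sum_ite_mem, Finset.univ_inter]
        exact hwf1
      · rw [Fintype.sum_sum_type]
        simp only [hw_def, Sum.elim_inl, Sum.elim_inr]
        rw [← hcd, ← hcomb]
        congr 1
        rw [show (∑ i ∈ sf, wf i • v i) = ∑ i ∈ sf, (if i ∈ sf then wf i else 0) • v i from
          Finset.sum_congr rfl fun i hi => by simp [hi]]
        exact (Finset.sum_subset (Finset.subset_univ sf)
          (fun i _ hi => by simp [hi])).symm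
  -- minimal-support representation
  set S : Set ℕ := {m | ∃ κ : V ⊕ E → ℝ, ((∀ s, 0 ≤ κ s) ∧ (∑ s, κ s * χ s) = 1 ∧
      (∑ s, κ s • w s) = x) ∧ (Finset.univ.filter fun s => κ s ≠ 0).card = m} with hS_def
  have hSne : S.Nonempty := by
    obtain ⟨κ, hκ⟩ := hrep
    exact ⟨_, κ, hκ, rfl⟩
  obtain ⟨κ, hκ, hκcard⟩ := Nat.sInf_mem hSne
  obtain ⟨hκ0, hκ1, hκx⟩ := hκ
  have hmin : ∀ κ' : V ⊕ E → ℝ, ((∀ s, 0 ≤ κ' s) ∧ (∑ s, κ' s * χ s) = 1 ∧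
      (∑ s, κ' s • w s) = x) → sInf S ≤ (Finset.univ.filter fun s => κ' s ≠ 0).card :=
    fun κ' h => Nat.sInf_le ⟨κ', h, rfl⟩
  have hδx : (∑ t, δ t * x t) = ∑ s, κ s * a s := by rw [← hκx, hdot]
  have hxge : δ0 ≤ ∑ s, κ s * a s := hδx ▸ hxδ
  -- Lemma A: minimality kills null directions
  have lemA : ∀ d : V ⊕ E → ℝ, (∀ s, κ s = 0 → d s = 0) →
      (∑ s, d s * χ s) = 0 → (∑ s, d s • w s) = 0 → d = 0 := by
    classical
    have key : ∀ e : V ⊕ E → ℝ, (∀ s, κ s = 0 → e s = 0) → (∑ s, e s * χ s) = 0 →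
        (∑ s, e s • w s) = 0 → ∀ s0, e s0 < 0 → False := by
      intro e hesupp hechi hew s0 hs0
      set T : Finset (V ⊕ E) := Finset.univ.filter (fun s => e s < 0) with hT_def
      have hTne : T.Nonempty := ⟨s0, by simp [hT_def, hs0]⟩
      set g : V ⊕ E → ℝ := fun s => κ s / (-(e s)) with hg_def
      set t0 := T.inf' hTne g with ht0_def
      have hκpos : ∀ s ∈ T, 0 < κ s := by
        intro s hsT
        have hes : e s < 0 := by simpa [hT_def] using hsT
        rcases (hκ0 s).lt_or_eq with h | h
        · exact h
        · exact absurd (hesupp s h.symm) (by simpa using hes.ne)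
      have ht0pos : 0 < t0 := by
        rw [ht0_def, Finset.lt_inf'_iff]
        intro s hsT
        have hes : e s < 0 := by simpa [hT_def] using hsT
        exact div_pos (hκpos s hsT) (by linarith)
      have hκ'0 : ∀ s, 0 ≤ κ s + t0 * e s := by
        intro s
        by_cases hse : e s < 0
        · have hmem : s ∈ T := by simp [hT_def, hse]
          have hle : t0 ≤ κ s / (-(e s)) := Finset.inf'_le g hmem
          have h1 : t0 * (-(e s)) ≤ κ s := by
            rw [← le_div_iff₀ (by linarith)]
            exact hle
          nlinarith
        · push_neg at hse
          exact add_nonneg (hκ0 s) (mul_nonneg ht0pos.le hse)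
      have hrep' : (∀ s, 0 ≤ (fun s => κ s + t0 * e s) s) ∧
          (∑ s, (fun s => κ s + t0 * e s) s * χ s) = 1 ∧
          (∑ s, (fun s => κ s + t0 * e s) s • w s) = x := by
        refine ⟨hκ'0, ?_, ?_⟩
        · simp only [add_mul, Finset.sum_add_distrib, hκ1, mul_assoc, ← Finset.mul_sum, hechi,
            mul_zero, add_zero]
        · simp only [add_smul, Finset.sum_add_distrib, hκx, mul_smul, ← Finset.smul_sum, hew,
            smul_zero, add_zero]
      obtain ⟨s1, hs1T, hs1eq⟩ := Finset.exists_mem_eq_inf' hTne g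
      have hes1 : e s1 < 0 := by simpa [hT_def] using hs1T
      have hκ's1 : κ s1 + t0 * e s1 = 0 := by
        have hne : e s1 ≠ 0 := hes1.ne
        rw [ht0_def, hs1eq, hg_def]
        field_simp
        ring
      have hsub : (Finset.univ.filter fun s => κ s + t0 * e s ≠ 0) ⊆
          (Finset.univ.filter fun s => κ s ≠ 0) := by
        intro s hs
        simp only [Finset.mem_filter, Finset.mem_univ, true_and] at hs ⊢
        intro h
        exact hs (by simp [h, hesupp s h])
      have hss : (Finset.univ.filter fun s => κ s + t0 * e s ≠ 0) ⊂
          (Finset.univ.filter fun s => κ s ≠ 0) := by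
        rw [Finset.ssubset_iff_of_subset hsub]
        refine ⟨s1, ?_, ?_⟩
        · simp only [Finset.mem_filter, Finset.mem_univ, true_and]
          exact (hκpos s1 hs1T).ne'
        · simp [hκ's1]
      have hlt := Finset.card_lt_card hss
      have hge := hmin _ hrep'
      omega
    intro d hsupp hchi hw0
    by_contra hd
    have hne : ∃ s, d s ≠ 0 := by
      by_contra h
      push_neg at h
      exact hd (funext h)
    obtain ⟨s1, hs1⟩ := hne
    rcases hs1.lt_or_gt with h | h
    · exact key d hsupp hchi hw0 s1 h
    · refine key (fun s => -(d s)) (fun s hs => by simp [hsupp s hs]) ?_ ?_ s1 (by simpa using h)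
      · simp [neg_mul, Finset.sum_neg_distrib, hchi]
      · simp [neg_smul, Finset.sum_neg_distrib, hw0]
  -- Lemma B: extremeness kills feasible perturbation directions
  have lemB : ∀ d : V ⊕ E → ℝ, (∀ s, κ s = 0 → d s = 0) → (∑ s, d s * χ s) = 0 →
      ((∑ s, κ s * a s) = δ0 → (∑ s, d s * a s) = 0) → (∑ s, d s • w s) = 0 := by
    classical
    intro d hsupp hchi hneut
    by_contra hu
    have hdne : ∃ s, d s ≠ 0 := by
      by_contra h
      push_neg at h
      exact hu (Finset.sum_eq_zero fun s _ => by rw [h s, zero_smul])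
    obtain ⟨sd, hsd⟩ := hdne
    set T : Finset (V ⊕ E) := Finset.univ.filter (fun s => d s ≠ 0) with hT_def
    have hTne : T.Nonempty := ⟨sd, by simp [hT_def, hsd]⟩
    set t1 := T.inf' hTne (fun s => κ s / |d s|) with ht1_def
    have hκpos : ∀ s ∈ T, 0 < κ s := by
      intro s hsT
      have hds : d s ≠ 0 := by simpa [hT_def] using hsT
      rcases (hκ0 s).lt_or_eq with h | h
      · exact h
      · exact absurd (hsupp s h.symm) hds
    have ht1pos : 0 < t1 := by
      rw [ht1_def, Finset.lt_inf'_iff]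
      intro s hsT
      have hds : d s ≠ 0 := by simpa [hT_def] using hsT
      exact div_pos (hκpos s hsT) (abs_pos.mpr hds)
    set c := ∑ s, d s * a s with hc_def
    have hgap : c ≠ 0 → δ0 < ∑ s, κ s * a s := by
      intro hc
      rcases hxge.lt_or_eq with h | h
      · exact h
      · exact absurd (hneut h.symm) hc
    set t := if c = 0 then t1 else min t1 ((∑ s, κ s * a s - δ0) / |c|) with ht_def
    have htpos : 0 < t := by
      rw [ht_def]
      split
      · exact ht1pos
      · exact lt_min ht1pos (div_pos (sub_pos.mpr (hgap ‹_›)) (abs_pos.mpr ‹_›))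
    have htle1 : t ≤ t1 := by
      rw [ht_def]; split
      · exact le_refl _
      · exact min_le_left _ _
    have htle : ∀ s, t * |d s| ≤ κ s := by
      intro s
      by_cases hds : d s = 0
      · simp [hds, hκ0 s]
      · have hmem : s ∈ T := by simp [hT_def, hds]
        rw [← le_div_iff₀ (abs_pos.mpr hds)]
        exact le_trans htle1 (Finset.inf'_le _ hmem)
    have htc : t * |c| ≤ (∑ s, κ s * a s) - δ0 := by
      by_cases hc : c = 0
      · rw [hc, abs_zero, mul_zero]
        exact sub_nonneg.mpr hxge
      · have ht2 : t ≤ ((∑ s, κ s * a s) - δ0) / |c| := by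
          rw [ht_def]; simp [hc]
        rw [← le_div_iff₀ (abs_pos.mpr hc)]
        exact ht2
    set u := ∑ s, d s • w s with hu_def
    have hmm : ∀ σ : ℝ, |σ| = 1 → (x + (σ * t) • u) ∈ {x ∈ P | δ0 ≤ ∑ t, δ t * x t} := by
      intro σ hσabs
      have hpoint : x + (σ * t) • u = ∑ s, (κ s + σ * t * d s) • w s := by
        simp only [add_smul, Finset.sum_add_distrib, hκx, hu_def]
        congr 1
        rw [Finset.smul_sum]
        exact Finset.sum_congr rfl fun s _ => by rw [smul_smul]
      have hκ'0 : ∀ s, 0 ≤ κ s + σ * t * d s := by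
        intro s
        have habs : |σ * t * d s| ≤ κ s := by
          rw [abs_mul, abs_mul, hσabs, one_mul, abs_of_pos htpos]
          exact htle s
        have := neg_abs_le (σ * t * d s)
        linarith
      refine ⟨?_, ?_⟩
      · rw [hpoint]
        apply hmemP _ hκ'0
        simp only [add_mul, Finset.sum_add_distrib, hκ1, mul_assoc, ← Finset.mul_sum, hchi,
          mul_zero, add_zero]
      · rw [hpoint, hdot]
        have heq : ∑ s, (κ s + σ * t * d s) * a s = (∑ s, κ s * a s) + (σ * t) * c := by
          simp only [add_mul, Finset.sum_add_distrib, hc_def, mul_assoc, ← Finset.mul_sum]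
        rw [heq]
        have habs : |(σ * t) * c| = t * |c| := by
          rw [abs_mul, abs_mul, hσabs, one_mul, abs_of_pos htpos]
        have := neg_abs_le ((σ * t) * c)
        linarith
    have hy := hmm 1 (by norm_num)
    have hz := hmm (-1) (by norm_num)
    have hseg : x ∈ openSegment ℝ (x + ((1:ℝ) * t) • u) (x + ((-1:ℝ) * t) • u) := by
      refine ⟨1/2, 1/2, by norm_num, by norm_num, by norm_num, ?_⟩
      module
    obtain ⟨h1, -⟩ := hext _ hy _ hz hseg
    have ht0 : ((1:ℝ) * t) • u = 0 := by
      have := h1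
      rwa [add_eq_left] at this
    rw [one_mul, smul_eq_zero] at ht0
    rcases ht0 with h | h
    · exact htpos.ne' h
    · exact hu h
  -- support has at most two elements
  have hcard2 : (Finset.univ.filter fun s => κ s ≠ 0).card ≤ 2 := by
    classical
    by_contra hgt
    push_neg at hgt
    obtain ⟨s1, s2, s3, hm1, hm2, hm3, h12, h13, h23⟩ := Finset.two_lt_card_iff.mp hgt
    have hκ1 : κ s1 ≠ 0 := by simpa using hm1
    have hκ2 : κ s2 ≠ 0 := by simpa using hm2
    have hκ3 : κ s3 ≠ 0 := by simpa using hm3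
    obtain ⟨y, hy0, hyp, hyq⟩ := exists_ker3 ![χ s1, χ s2, χ s3] ![a s1, a s2, a s3]
    rw [Fin.sum_univ_three] at hyp hyq
    simp only [Matrix.cons_val_zero, Matrix.cons_val_one, Matrix.head_cons,
      Matrix.cons_val_two, Matrix.tail_cons] at hyp hyq
    set d : V ⊕ E → ℝ := fun s => if s = s1 then y 0 else if s = s2 then y 1 else
      if s = s3 then y 2 else 0 with hd_def
    have hd1 : d s1 = y 0 := by simp [hd_def]
    have hd2 : d s2 = y 1 := by simp [hd_def, h12.symm]
    have hd3 : d s3 = y 2 := by simp [hd_def, h13.symm, h23.symm]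
    have hdoff : ∀ s, s ≠ s1 → s ≠ s2 → s ≠ s3 → d s = 0 := by
      intro s hs1 hs2 hs3
      simp [hd_def, hs1, hs2, hs3]
    have hsupp : ∀ s, κ s = 0 → d s = 0 := by
      intro s hs
      refine hdoff s ?_ ?_ ?_ <;> rintro rfl <;> [exact hκ1 hs; exact hκ2 hs; exact hκ3 hs]
    have hchi : (∑ s, d s * χ s) = 0 := by
      rw [sum_eq_three h12 h13 h23 (fun s => d s * χ s)
        (fun s a b c => by simp [hdoff s a b c]), hd1, hd2, hd3]
      exact hyp
    have hneut : (∑ s, d s * a s) = 0 := by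
      rw [sum_eq_three h12 h13 h23 (fun s => d s * a s)
        (fun s a b c => by simp [hdoff s a b c]), hd1, hd2, hd3]
      exact hyq
    have hw0 := lemB d hsupp hchi (fun _ => hneut)
    have hzero := lemA d hsupp hchi hw0
    have h0 : y 0 = 0 := by rw [← hd1, hzero]; rfl
    have h1 : y 1 = 0 := by rw [← hd2, hzero]; rfl
    have h2 : y 2 = 0 := by rw [← hd3, hzero]; rfl
    apply hy0
    funext i
    fin_cases i
    · exact h0
    · exact h1
    · exact h2
  -- final case analysis
  have hwl : ∀ i, w (Sum.inl i) = v i := fun i => by rw [hw_def]; rfl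
  have hwr : ∀ j, w (Sum.inr j) = r j := fun j => by rw [hw_def]; rfl
  have hχl : ∀ i : V, χ (Sum.inl i) = 1 := fun i => by rw [hχ_def]; rfl
  have hχr : ∀ j : E, χ (Sum.inr j) = 0 := fun j => by rw [hχ_def]; rfl
  set sup := Finset.univ.filter (fun s => κ s ≠ 0) with hsup_def
  have hvanish : ∀ s, s ∉ sup → κ s = 0 := fun s hs => by
    rw [hsup_def] at hs
    simpa using hs
  have hsupne : sup.Nonempty := by
    rw [Finset.nonempty_iff_ne_empty]
    intro h
    have h0 : (∑ s, κ s * χ s) = 0 := Finset.sum_eq_zero fun s _ => by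
      rw [hvanish s (by simp [h]), zero_mul]
    rw [hκ1] at h0
    norm_num at h0
  -- the two-element cases as helper facts
  have caseVV : ∀ i k : V, (Sum.inl i : V ⊕ E) ≠ Sum.inl k →
      κ (Sum.inl i) ≠ 0 → κ (Sum.inl k) ≠ 0 →
      (∀ s, s ≠ Sum.inl i → s ≠ Sum.inl k → κ s = 0) →
      (∃ i k, (∑ t, δ t * v i t < δ0) ∧ δ0 ≤ ∑ t, δ t * v k t ∧
        x = v i + ((δ0 - ∑ t, δ t * v i t) / (∑ t, δ t * (v k t - v i t))) • (v k - v i)) := by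
    intro i k hik hκi hκk hothers
    have hκipos : 0 < κ (Sum.inl i) := (hκ0 _).lt_of_ne' hκi
    have hκkpos : 0 < κ (Sum.inl k) := (hκ0 _).lt_of_ne' hκk
    have hsum1 : κ (Sum.inl i) + κ (Sum.inl k) = 1 := by
      have := sum_eq_two hik (fun s => κ s * χ s)
        (fun s h1 h2 => by simp [hothers s h1 h2])
      rw [hκ1] at this
      simp only [hχl, mul_one] at this
      exact this.symm
    have hx2 : x = κ (Sum.inl i) • v i + κ (Sum.inl k) • v k := by
      have := sum_eq_two hik (fun s => κ s • w s)
        (fun s h1 h2 => by simp [hothers s h1 h2])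
      rw [hκx] at this
      simp only [hwl] at this
      exact this
    have hκa : (∑ s, κ s * a s) =
        κ (Sum.inl i) * a (Sum.inl i) + κ (Sum.inl k) * a (Sum.inl k) :=
      sum_eq_two hik _ (fun s h1 h2 => by simp [hothers s h1 h2])
    set d0 : V ⊕ E → ℝ := fun s => if s = Sum.inl i then 1 else
      if s = Sum.inl k then -1 else 0 with hd0_def
    have hd0i : d0 (Sum.inl i) = 1 := by simp [hd0_def]
    have hd0k : d0 (Sum.inl k) = -1 := by simp [hd0_def, hik.symm]
    have hd0off : ∀ s, s ≠ Sum.inl i → s ≠ Sum.inl k → d0 s = 0 := fun s h1 h2 => by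
      simp [hd0_def, h1, h2]
    have hd0supp : ∀ s, κ s = 0 → d0 s = 0 := by
      intro s hs
      refine hd0off s ?_ ?_ <;> rintro rfl <;> [exact hκi hs; exact hκk hs]
    have hd0chi : (∑ s, d0 s * χ s) = 0 := by
      rw [sum_eq_two hik (fun s => d0 s * χ s)
        (fun s h1 h2 => by simp [hd0off s h1 h2])]
      simp [hd0i, hd0k, hχl]
    have hd0w : (∑ s, d0 s • w s) = v i - v k := by
      rw [sum_eq_two hik (fun s => d0 s • w s)
        (fun s h1 h2 => by simp [hd0off s h1 h2])]
      simp only [hd0i, hd0k, hwl]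
      module
    have hd0a : (∑ s, d0 s * a s) = a (Sum.inl i) - a (Sum.inl k) := by
      rw [sum_eq_two hik (fun s => d0 s * a s)
        (fun s h1 h2 => by simp [hd0off s h1 h2])]
      simp only [hd0i, hd0k]
      ring
    have hne : (∑ s, d0 s • w s) ≠ 0 := by
      intro h
      have h0 := lemA d0 hd0supp hd0chi h
      have h1 : (1 : ℝ) = 0 := by rw [← hd0i, h0]; rfl
      exact one_ne_zero h1
    have hδeq : (∑ s, κ s * a s) = δ0 := by
      by_contra h
      exact hne (lemB d0 hd0supp hd0chi (fun he => absurd he h))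
    have hane : a (Sum.inl i) ≠ a (Sum.inl k) := by
      intro h
      exact hne (lemB d0 hd0supp hd0chi (fun _ => by rw [hd0a, h, sub_self]))
    rw [hκa] at hδeq
    -- inner helper, applied to the sorted pair
    have inner : ∀ (i k : V) (κi κk : ℝ), x = κi • v i + κk • v k → κi + κk = 1 →
        0 < κi → 0 < κk → a (Sum.inl i) < a (Sum.inl k) →
        κi * a (Sum.inl i) + κk * a (Sum.inl k) = δ0 →
        (∃ i k, (∑ t, δ t * v i t < δ0) ∧ δ0 ≤ ∑ t, δ t * v k t ∧
          x = v i + ((δ0 - ∑ t, δ t * v i t) / (∑ t, δ t * (v k t - v i t))) • (v k - v i)) := by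
      intro i k κi κk hx2 hsum1 hκipos hκkpos hlt hδeq
      set ai := a (Sum.inl i)
      set ak := a (Sum.inl k)
      have h1 : δ0 - ai = κk * (ak - ai) := by linear_combination (-1) * hδeq + ai * hsum1
      have h2 : ak - δ0 = κi * (ak - ai) := by linear_combination hδeq - ak * hsum1
      have hailt : ai < δ0 := by nlinarith
      have hakge : δ0 ≤ ak := by nlinarith
      have hD : (∑ t, δ t * (v k t - v i t)) = ak - ai := by
        simp only [mul_sub, Finset.sum_sub_distrib]
        rw [← ha_inl i, ← ha_inl k]
      refine ⟨i, k, ?_, ?_, ?_⟩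
      · rw [← ha_inl i]; exact hailt
      · rw [← ha_inl k]; exact hakge
      · rw [← ha_inl i, hD]
        have hcoef : (δ0 - ai) / (ak - ai) = κk := by
          rw [h1, mul_div_cancel_right₀ _ (by linarith : ak - ai ≠ 0)]
        rw [hcoef, hx2]
        have hκieq : κi = 1 - κk := by linarith
        rw [hκieq]
        module
    rcases lt_or_gt_of_ne hane with h | h
    · exact inner i k _ _ hx2 hsum1 hκipos hκkpos h hδeq
    · exact inner k i _ _ (by rw [hx2]; module) (by linarith) hκkpos hκipos h
        (by linarith)
  have caseVE : ∀ (i : V) (j : E), κ (Sum.inl i) ≠ 0 → κ (Sum.inr j) ≠ 0 →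
      (∀ s, s ≠ Sum.inl i → s ≠ Sum.inr j → κ s = 0) →
      (∃ i j, (∑ t, δ t * v i t < δ0) ∧ 0 < ∑ t, δ t * r j t ∧
        x = v i + ((δ0 - ∑ t, δ t * v i t) / (∑ t, δ t * r j t)) • r j) := by
    intro i j hκi hκj hothers
    have hij : (Sum.inl i : V ⊕ E) ≠ Sum.inr j := by simp
    have hκjpos : 0 < κ (Sum.inr j) := (hκ0 _).lt_of_ne' hκj
    have hsum1 : κ (Sum.inl i) = 1 := by
      have := sum_eq_two hij (fun s => κ s * χ s)
        (fun s h1 h2 => by simp [hothers s h1 h2])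
      rw [hκ1] at this
      simp only [hχl, hχr, mul_one, mul_zero, add_zero] at this
      exact this.symm
    have hx2 : x = v i + κ (Sum.inr j) • r j := by
      have := sum_eq_two hij (fun s => κ s • w s)
        (fun s h1 h2 => by simp [hothers s h1 h2])
      rw [hκx] at this
      simp only [hwl, hwr] at this
      rw [hsum1, one_smul] at this
      exact this
    have hκa : (∑ s, κ s * a s) = a (Sum.inl i) + κ (Sum.inr j) * a (Sum.inr j) := by
      rw [sum_eq_two hij (fun s => κ s * a s) (fun s h1 h2 => by simp [hothers s h1 h2])]
      rw [hsum1, one_mul]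
    set d0 : V ⊕ E → ℝ := fun s => if s = Sum.inr j then 1 else 0 with hd0_def
    have hd0j : d0 (Sum.inr j) = 1 := by simp [hd0_def]
    have hd0off : ∀ s, s ≠ Sum.inr j → d0 s = 0 := fun s h1 => by simp [hd0_def, h1]
    have hd0supp : ∀ s, κ s = 0 → d0 s = 0 := by
      intro s hs
      refine hd0off s ?_
      rintro rfl
      exact hκj hs
    have hd0chi : (∑ s, d0 s * χ s) = 0 := by
      rw [sum_eq_one' (s1 := Sum.inr j) (fun s => d0 s * χ s)
        (fun s h1 => by simp [hd0off s h1])]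
      simp [hd0j, hχr]
    have hd0w : (∑ s, d0 s • w s) = r j := by
      rw [sum_eq_one' (s1 := Sum.inr j) (fun s => d0 s • w s)
        (fun s h1 => by simp [hd0off s h1])]
      simp [hd0j, hwr]
    have hd0a : (∑ s, d0 s * a s) = a (Sum.inr j) := by
      rw [sum_eq_one' (s1 := Sum.inr j) (fun s => d0 s * a s)
        (fun s h1 => by simp [hd0off s h1])]
      simp [hd0j]
    have hne : (∑ s, d0 s • w s) ≠ 0 := by
      intro h
      have h0 := lemA d0 hd0supp hd0chi h
      have h1 : (1 : ℝ) = 0 := by rw [← hd0j, h0]; rfl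
      exact one_ne_zero h1
    have hδeq : (∑ s, κ s * a s) = δ0 := by
      by_contra h
      exact hne (lemB d0 hd0supp hd0chi (fun he => absurd he h))
    have hbne : a (Sum.inr j) ≠ 0 := by
      intro h
      exact hne (lemB d0 hd0supp hd0chi (fun _ => by rw [hd0a, h]))
    have hble : 0 ≤ a (Sum.inr j) := by rw [ha_inr j]; exact hnn j
    have hbpos : 0 < a (Sum.inr j) := hble.lt_of_ne' hbne
    rw [hκa] at hδeq
    have hailt : a (Sum.inl i) < δ0 := by nlinarith
    refine ⟨i, j, ?_, ?_, ?_⟩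
    · rw [← ha_inl i]; exact hailt
    · rw [← ha_inr j]; exact hbpos
    · rw [← ha_inl i, ← ha_inr j]
      have hcoef : (δ0 - a (Sum.inl i)) / a (Sum.inr j) = κ (Sum.inr j) := by
        rw [show δ0 - a (Sum.inl i) = κ (Sum.inr j) * a (Sum.inr j) by linarith,
          mul_div_cancel_right₀ _ hbne]
      rw [hcoef]
      exact hx2
  -- main case split on support size
  have hpos : 1 ≤ sup.card := Finset.card_pos.mpr hsupne
  interval_cases h : sup.card
  · -- card = 1
    obtain ⟨s0, hs0⟩ := Finset.card_eq_one.mp h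
    have hmem : κ s0 ≠ 0 := by
      have : s0 ∈ sup := by rw [hs0]; exact Finset.mem_singleton_self s0
      rw [hsup_def] at this
      simpa using this
    have hothers : ∀ s, s ≠ s0 → κ s = 0 := by
      intro s hs
      refine hvanish s ?_
      rw [hs0]
      simpa using hs
    have hsum1 := sum_eq_one' (s1 := s0) (fun s => κ s * χ s)
      (fun s h1 => by simp [hothers s h1])
    rw [hκ1] at hsum1
    rcases s0 with i | j
    · have hκi : κ (Sum.inl i) = 1 := by
        rw [hχl, mul_one] at hsum1
        exact hsum1.symm
      have hx1 : x = v i := by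
        have := sum_eq_one' (s1 := Sum.inl i) (fun s => κ s • w s)
          (fun s h1 => by simp [hothers s h1])
        rw [hκx] at this
        simp only [hwl] at this
        rw [hκi, one_smul] at this
        exact this
      left
      refine ⟨i, ?_, hx1⟩
      have : (∑ s, κ s * a s) = a (Sum.inl i) := by
        rw [sum_eq_one' (s1 := Sum.inl i) (fun s => κ s * a s)
          (fun s h1 => by simp [hothers s h1])]
        rw [hκi, one_mul]
      rw [← ha_inl i, ← this, ← hδx]
      exact hxδ
    · rw [hχr, mul_zero] at hsum1
      norm_num at hsum1
  · -- card = 2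
    obtain ⟨s0, s1, hne01, hs01⟩ := Finset.card_eq_two.mp h
    have hmem0 : κ s0 ≠ 0 := by
      have : s0 ∈ sup := by rw [hs01]; simp
      rw [hsup_def] at this; simpa using this
    have hmem1 : κ s1 ≠ 0 := by
      have : s1 ∈ sup := by rw [hs01]; simp
      rw [hsup_def] at this; simpa using this
    have hothers : ∀ s, s ≠ s0 → s ≠ s1 → κ s = 0 := by
      intro s h1 h2
      refine hvanish s ?_
      rw [hs01]
      simp [h1, h2]
    rcases s0 with i | j <;> rcases s1 with i' | j'
    · right; left
      exact caseVV i i' hne01 hmem0 hmem1 hothers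
    · right; right
      exact caseVE i j' hmem0 hmem1 hothers
    · right; right
      exact caseVE i' j hmem1 hmem0 (fun s h1 h2 => hothers s h2 h1)
    · exfalso
      have := sum_eq_two hne01 (fun s => κ s * χ s)
        (fun s h1 h2 => by simp [hothers s h1 h2])
      rw [hκ1] at this
      simp [hχr] at this
end

section
/- Let (δ¹)^T x ≥ δ¹₀ and (δ²)^T x ≥ δ²₀ be non-negative cuts for P cutting off the same vertex set V^c. Then {x ∈ P : (δ¹)^T x ≥ δ¹₀} ⊆ {x ∈ P : (δ²)^T x ≥ δ²₀} if and only if (i) 1/α'_{i,j}(δ¹,δ¹₀) ≤ 1/α'_{i,j}(δ²,δ²₀) for all i ∈ V^c and j ∈ E, and (ii) 1/β'_{i,k}(δ¹,δ¹₀) ≤ 1/β'_{i,k}(δ²,δ²₀) for all i ∈ V^c and k ∈ V \ V^c. -/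
open Pointwise

private def dtp {n : ℕ} (δ x : Fin n → ℝ) : ℝ := ∑ t, δ t * x t

private lemma dtp_add {n : ℕ} (δ x y : Fin n → ℝ) :
    dtp δ (x + y) = dtp δ x + dtp δ y := by
  simp [dtp, mul_add, Finset.sum_add_distrib]

private lemma dtp_sub {n : ℕ} (δ x y : Fin n → ℝ) :
    dtp δ (x - y) = dtp δ x - dtp δ y := by
  simp [dtp, mul_sub, Finset.sum_sub_distrib]

private lemma dtp_smul {n : ℕ} (δ : Fin n → ℝ) (c : ℝ) (x : Fin n → ℝ) :
    dtp δ (c • x) = c * dtp δ x := by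
  simp [dtp, Finset.mul_sum, mul_left_comm]

private lemma dtp_sum {n : ℕ} {ι : Type*} (s : Finset ι) (δ : Fin n → ℝ) (f : ι → Fin n → ℝ) :
    dtp δ (∑ i ∈ s, f i) = ∑ i ∈ s, dtp δ (f i) := by
  classical
  induction s using Finset.induction_on with
  | empty => simp [dtp]
  | insert _ _ h ih => simp [Finset.sum_insert h, dtp_add, ih]

/-- Lemma `dominance_lemma`: dominance between two non-negative cuts cutting
off the same vertex set is characterized by comparison of the reciprocals of
the intersection values `α'` and `β'` (where `1/α'_{i,j} = δ^T r^j/(δ₀ − δ^T v^i)`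
and `1/β'_{i,k} = δ^T(v^k − v^i)/(δ₀ − δ^T v^i)`, the convention `1/∞ = 0`
being built in). -/
theorem stmt7 {n : ℕ} {V E : Type*} [Fintype V] [Fintype E]
    (v : V → Fin n → ℝ) (r : E → Fin n → ℝ)
    (P : Set (Fin n → ℝ))
    (hP : P = convexHull ℝ (Set.range v) +
      {d | ∃ μ : E → ℝ, (∀ j, 0 ≤ μ j) ∧ d = ∑ j, μ j • r j})
    (δ1 : Fin n → ℝ) (δ10 : ℝ) (δ2 : Fin n → ℝ) (δ20 : ℝ)
    (hnn1 : ∀ j, 0 ≤ ∑ t, δ1 t * r j t) (hnn2 : ∀ j, 0 ≤ ∑ t, δ2 t * r j t)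
    (Vc : Set V) (hVcne : Vc.Nonempty)
    (hVc1 : Vc = {i | ∑ t, δ1 t * v i t < δ10})
    (hVc2 : Vc = {i | ∑ t, δ2 t * v i t < δ20}) :
    {x ∈ P | δ10 ≤ ∑ t, δ1 t * x t} ⊆ {x ∈ P | δ20 ≤ ∑ t, δ2 t * x t} ↔
      ((∀ i ∈ Vc, ∀ j : E,
          (∑ t, δ1 t * r j t) / (δ10 - ∑ t, δ1 t * v i t) ≤
            (∑ t, δ2 t * r j t) / (δ20 - ∑ t, δ2 t * v i t)) ∧
        (∀ i ∈ Vc, ∀ k ∉ Vc,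
          (∑ t, δ1 t * (v k t - v i t)) / (δ10 - ∑ t, δ1 t * v i t) ≤
            (∑ t, δ2 t * (v k t - v i t)) / (δ20 - ∑ t, δ2 t * v i t))) := by
  classical
  have hnn1' : ∀ j, 0 ≤ dtp δ1 (r j) := hnn1
  have hnn2' : ∀ j, 0 ≤ dtp δ2 (r j) := hnn2
  have hmemVc1 : ∀ i ∈ Vc, dtp δ1 (v i) < δ10 := by
    intro i hi; rw [hVc1] at hi; exact hi
  have hmemVc2 : ∀ i ∈ Vc, dtp δ2 (v i) < δ20 := by
    intro i hi; rw [hVc2] at hi; exact hi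
  have hnot1 : ∀ k ∉ Vc, δ10 ≤ dtp δ1 (v k) := by
    intro k hk; rw [hVc1] at hk; exact le_of_not_gt hk
  constructor
  · intro h
    have key : ∀ y, y ∈ P → δ10 ≤ dtp δ1 y → δ20 ≤ dtp δ2 y := by
      intro y hy h1
      exact (h ⟨hy, h1⟩).2
    constructor
    · intro i hi j
      have ha1 : 0 < δ10 - dtp δ1 (v i) := by linarith [hmemVc1 i hi]
      have ha2 : 0 < δ20 - dtp δ2 (v i) := by linarith [hmemVc2 i hi]
      show dtp δ1 (r j) / (δ10 - dtp δ1 (v i)) ≤ dtp δ2 (r j) / (δ20 - dtp δ2 (v i))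
      rcases eq_or_lt_of_le (hnn1' j) with h0 | hrj
      · rw [← h0]
        simpa using div_nonneg (hnn2' j) ha2.le
      · set t : ℝ := (δ10 - dtp δ1 (v i)) / dtp δ1 (r j) with ht_def
        have ht : 0 < t := div_pos ha1 hrj
        have htmul : t * dtp δ1 (r j) = δ10 - dtp δ1 (v i) :=
          div_mul_cancel₀ _ (ne_of_gt hrj)
        have hxP : v i + t • r j ∈ P := by
          rw [hP]
          refine Set.add_mem_add (subset_convexHull ℝ _ ⟨i, rfl⟩) ?_
          refine ⟨fun j' => if j' = j then t else 0, ?_, ?_⟩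
          · intro j'; by_cases hj' : j' = j <;> simp [hj', ht.le]
          · simp [ite_smul]
        have hd1 : dtp δ1 (v i + t • r j) = δ10 := by
          rw [dtp_add, dtp_smul, htmul]; ring
        have h2 := key _ hxP (le_of_eq hd1.symm)
        rw [dtp_add, dtp_smul] at h2
        rw [div_le_div_iff₀ ha1 ha2]
        nlinarith [mul_le_mul_of_nonneg_left (by linarith : δ20 - dtp δ2 (v i) ≤ t * dtp δ2 (r j)) hrj.le]
    · intro i hi k hk
      have ha1 : 0 < δ10 - dtp δ1 (v i) := by linarith [hmemVc1 i hi]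
      have ha2 : 0 < δ20 - dtp δ2 (v i) := by linarith [hmemVc2 i hi]
      show dtp δ1 (v k - v i) / (δ10 - dtp δ1 (v i)) ≤
        dtp δ2 (v k - v i) / (δ20 - dtp δ2 (v i))
      have hs1 : 0 < dtp δ1 (v k - v i) := by
        rw [dtp_sub]; linarith [hnot1 k hk]
      set t : ℝ := (δ10 - dtp δ1 (v i)) / dtp δ1 (v k - v i) with ht_def
      have ht : 0 < t := div_pos ha1 hs1
      have ht1 : t ≤ 1 := by
        rw [div_le_one hs1, dtp_sub]; linarith [hnot1 k hk]
      have htmul : t * dtp δ1 (v k - v i) = δ10 - dtp δ1 (v i) :=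
        div_mul_cancel₀ _ (ne_of_gt hs1)
      have hxP : v i + t • (v k - v i) ∈ P := by
        rw [hP]
        have hhull : (1 - t) • v i + t • v k ∈ convexHull ℝ (Set.range v) :=
          (convex_convexHull ℝ (Set.range v)) (subset_convexHull ℝ _ ⟨i, rfl⟩)
            (subset_convexHull ℝ _ ⟨k, rfl⟩) (by linarith) ht.le (by ring)
        have := Set.add_mem_add hhull
          (show (0 : Fin n → ℝ) ∈ {d | ∃ μ : E → ℝ, (∀ j, 0 ≤ μ j) ∧ d = ∑ j, μ j • r j} from
            ⟨fun _ => 0, fun _ => le_refl 0, by simp⟩)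
        have heq : (1 - t) • v i + t • v k + 0 = v i + t • (v k - v i) := by
          ext s; simp [Pi.smul_apply]; ring
        rwa [heq] at this
      have hd1 : dtp δ1 (v i + t • (v k - v i)) = δ10 := by
        rw [dtp_add, dtp_smul, htmul]; ring
      have h2 := key _ hxP (le_of_eq hd1.symm)
      rw [dtp_add, dtp_smul] at h2
      rw [div_le_div_iff₀ ha1 ha2]
      nlinarith [mul_le_mul_of_nonneg_left
        (by linarith : δ20 - dtp δ2 (v i) ≤ t * dtp δ2 (v k - v i)) hs1.le]
  · rintro ⟨hA, hB⟩ x ⟨hxP, hx1⟩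
    refine ⟨hxP, ?_⟩
    have hx1' : δ10 ≤ dtp δ1 x := hx1
    show δ20 ≤ ∑ t, δ2 t * x t
    -- decompose x
    rw [hP, Set.mem_add] at hxP
    obtain ⟨hpt, hhull, d, ⟨μ, hμ0, hμd⟩, hsum⟩ := hxP
    rw [convexHull_range_eq_exists_affineCombination] at hhull
    obtain ⟨s, w, hw0, hw1, hws⟩ := hhull
    set lam : V → ℝ := fun i => if i ∈ s then w i else 0 with hlam_def
    have hlam0 : ∀ i, 0 ≤ lam i := by
      intro i; simp only [hlam_def]; split
      · exact hw0 i ‹_›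
      · exact le_refl 0
    have hlam1 : ∑ i, lam i = 1 := by
      rw [← hw1]
      simp [hlam_def, Finset.sum_ite_mem]
    have hxh : hpt = ∑ i, lam i • v i := by
      rw [← hws, Finset.affineCombination_eq_linear_combination s v w hw1]
      simp only [hlam_def, ite_smul, zero_smul, Finset.sum_ite_mem, Finset.univ_inter]
    have hdx1 : dtp δ1 x = ∑ i, lam i * dtp δ1 (v i) + ∑ j, μ j * dtp δ1 (r j) := by
      rw [← hsum, dtp_add, hxh, hμd, dtp_sum, dtp_sum]
      simp [dtp_smul]
    have hdx2 : dtp δ2 x = ∑ i, lam i * dtp δ2 (v i) + ∑ j, μ j * dtp δ2 (r j) := by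
      rw [← hsum, dtp_add, hxh, hμd, dtp_sum, dtp_sum]
      simp [dtp_smul]
    -- max ratio
    have hFne : (Set.toFinite Vc).toFinset.Nonempty := by
      rwa [Set.Finite.toFinset_nonempty]
    obtain ⟨i0, hi0F, hmax⟩ := Finset.exists_max_image (Set.toFinite Vc).toFinset
      (fun i => (δ20 - dtp δ2 (v i)) / (δ10 - dtp δ1 (v i))) hFne
    have hi0 : i0 ∈ Vc := (Set.Finite.mem_toFinset _).mp hi0F
    have ha1 : 0 < δ10 - dtp δ1 (v i0) := by linarith [hmemVc1 i0 hi0]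
    have ha2 : 0 < δ20 - dtp δ2 (v i0) := by linarith [hmemVc2 i0 hi0]
    set ρ : ℝ := (δ20 - dtp δ2 (v i0)) / (δ10 - dtp δ1 (v i0)) with hρ_def
    have hρ0 : 0 ≤ ρ := le_of_lt (div_pos ha2 ha1)
    have claim1 : ∀ j, ρ * dtp δ1 (r j) ≤ dtp δ2 (r j) := by
      intro j
      have hc := (div_le_div_iff₀ ha1 ha2).mp (hA i0 hi0 j)
      have hc' : dtp δ1 (r j) * (δ20 - dtp δ2 (v i0)) ≤
          dtp δ2 (r j) * (δ10 - dtp δ1 (v i0)) := hc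
      rw [hρ_def, div_mul_eq_mul_div, div_le_iff₀ ha1]
      nlinarith [hc']
    have claim2 : ∀ i, lam i * (δ20 - dtp δ2 (v i)) ≤ lam i * (ρ * (δ10 - dtp δ1 (v i))) := by
      intro i
      refine mul_le_mul_of_nonneg_left ?_ (hlam0 i)
      by_cases hiVc : i ∈ Vc
      · have hai : 0 < δ10 - dtp δ1 (v i) := by linarith [hmemVc1 i hiVc]
        have hm := hmax i ((Set.Finite.mem_toFinset _).mpr hiVc)
        have hc := (div_le_div_iff₀ hai ha1).mp hm
        rw [hρ_def, div_mul_eq_mul_div, le_div_iff₀ ha1]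
        nlinarith
      · have hc := (div_le_div_iff₀ ha1 ha2).mp (hB i0 hi0 i hiVc)
        have hc' : (dtp δ1 (v i) - dtp δ1 (v i0)) * (δ20 - dtp δ2 (v i0)) ≤
            (dtp δ2 (v i) - dtp δ2 (v i0)) * (δ10 - dtp δ1 (v i0)) := by
          have e1 : dtp δ1 (v i - v i0) = dtp δ1 (v i) - dtp δ1 (v i0) := dtp_sub _ _ _
          have e2 : dtp δ2 (v i - v i0) = dtp δ2 (v i) - dtp δ2 (v i0) := dtp_sub _ _ _
          rw [← e1, ← e2]; exact hc
        rw [hρ_def, div_mul_eq_mul_div, le_div_iff₀ ha1]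
        nlinarith
    have S1 : ∑ i, lam i * (δ20 - dtp δ2 (v i)) ≤ ρ * ∑ i, lam i * (δ10 - dtp δ1 (v i)) := by
      rw [Finset.mul_sum]
      exact Finset.sum_le_sum fun i _ => (claim2 i).trans_eq (by ring)
    have S2 : ρ * ∑ j, μ j * dtp δ1 (r j) ≤ ∑ j, μ j * dtp δ2 (r j) := by
      rw [Finset.mul_sum]
      refine Finset.sum_le_sum fun j _ => ?_
      have := mul_le_mul_of_nonneg_left (claim1 j) (hμ0 j)
      nlinarith
    have e1 : ∑ i, lam i * (δ10 - dtp δ1 (v i)) = δ10 - ∑ i, lam i * dtp δ1 (v i) := by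
      simp [mul_sub, Finset.sum_sub_distrib, ← Finset.sum_mul, hlam1]
    have e2 : ∑ i, lam i * (δ20 - dtp δ2 (v i)) = δ20 - ∑ i, lam i * dtp δ2 (v i) := by
      simp [mul_sub, Finset.sum_sub_distrib, ← Finset.sum_mul, hlam1]
    have hkey : ∑ i, lam i * (δ10 - dtp δ1 (v i)) - ∑ j, μ j * dtp δ1 (r j) ≤ 0 := by
      rw [e1]; linarith [hx1'.trans (le_of_eq hdx1)]
    have hfinal : ρ * (∑ i, lam i * (δ10 - dtp δ1 (v i)) - ∑ j, μ j * dtp δ1 (r j)) ≤ 0 :=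
      mul_nonpos_of_nonneg_of_nonpos hρ0 hkey
    rw [mul_sub] at hfinal
    show δ20 ≤ dtp δ2 x
    rw [hdx2]
    linarith [S1, S2, hfinal, e2]
end

section
/- Let L be a mixed integer split polyhedron with V^in(L) ≠ ∅, fix k ∈ V^out(L) and λ a convex combination supported on V^in(L). Then the point v_λ + β_k(L,λ)(v^k − v_λ), where β_k(L,λ) = sup{β : v_λ + β(v^k − v_λ) ∈ L}, is a convex combination of v^k and the points v^i + β_k(L,e^i)(v^k − v^i) for i ∈ V^in(L). -/
/-- `S ⊆ ℝ^n` is a polyhedron: a finite intersection of halfspaces. -/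
def IsPolyhedron {n : ℕ} (S : Set (Fin n → ℝ)) : Prop :=
  ∃ (m : ℕ) (A : Fin m → Fin n → ℝ) (b : Fin m → ℝ),
    S = {x | ∀ i, ∑ j, A i j * x j ≤ b i}

lemma IsPolyhedron.convex {n : ℕ} {L : Set (Fin n → ℝ)} (h : IsPolyhedron L) :
    Convex ℝ L := by
  obtain ⟨m, A, b, rfl⟩ := h
  intro x hx y hy a c ha hc hac i
  have hxy : ∑ j, A i j * (a • x + c • y) j
      = a * ∑ j, A i j * x j + c * ∑ j, A i j * y j := by
    rw [Finset.mul_sum, Finset.mul_sum, ← Finset.sum_add_distrib]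
    refine Finset.sum_congr rfl fun j _ => ?_
    simp only [Pi.add_apply, Pi.smul_apply, smul_eq_mul]; ring
  calc ∑ j, A i j * (a • x + c • y) j
      = a * ∑ j, A i j * x j + c * ∑ j, A i j * y j := hxy
    _ ≤ a * b i + c * b i :=
        add_le_add (mul_le_mul_of_nonneg_left (hx i) ha)
          (mul_le_mul_of_nonneg_left (hy i) hc)
    _ = b i := by rw [← add_mul, hac, one_mul]

lemma IsPolyhedron.isClosed {n : ℕ} {L : Set (Fin n → ℝ)} (h : IsPolyhedron L) :
    IsClosed L := by
  obtain ⟨m, A, b, rfl⟩ := h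
  have : {x : Fin n → ℝ | ∀ i, ∑ j, A i j * x j ≤ b i}
      = ⋂ i, {x | ∑ j, A i j * x j ≤ b i} := by ext x; simp
  rw [this]
  exact isClosed_iInter fun i => isClosed_le (by fun_prop) continuous_const

private lemma combo_smul {n : ℕ} (a b : ℝ) (x y : Fin n → ℝ) :
    a • (x + b • (y - x)) = (a * (1 - b)) • x + (a * b) • y := by module

/-- Lemma `beta_properties`: the intersection point
`v_λ + β_k(L,λ)(v^k − v_λ)` is a convex combination of `v^k` and the
intersection points `v^i + β_k(L,e^i)(v^k − v^i)` for `i ∈ V^in(L)`. -/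
theorem stmt11 {n : ℕ} {Vin : Type*} [Fintype Vin]
    (L : Set (Fin n → ℝ)) (hpoly : IsPolyhedron L)
    (v : Vin → Fin n → ℝ) (hv : ∀ i, v i ∈ interior L)
    (vk : Fin n → ℝ) (hvk : vk ∉ interior L)
    (lam : Vin → ℝ) (hlam : ∀ i, 0 ≤ lam i) (hsum : ∑ i, lam i = 1) :
    (∑ i, lam i • v i) +
        sSup {β : ℝ | (∑ i, lam i • v i) + β • (vk - ∑ i, lam i • v i) ∈ L} •
          (vk - ∑ i, lam i • v i) ∈
      convexHull ℝ (insert vk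
        {y | ∃ i : Vin, y = v i + sSup {β : ℝ | v i + β • (vk - v i) ∈ L} • (vk - v i)}) := by
  have hconv : Convex ℝ L := hpoly.convex
  have hclosed : IsClosed L := hpoly.isClosed
  set T : Set (Fin n → ℝ) := insert vk
      {y | ∃ i : Vin, y = v i + sSup {β : ℝ | v i + β • (vk - v i) ∈ L} • (vk - v i)} with hT
  set vl : Fin n → ℝ := ∑ i, lam i • v i with hvl
  -- Basic facts about the set `{β | w + β • (vk - w) ∈ L}` for `w ∈ interior L`.
  have key : ∀ w : Fin n → ℝ, w ∈ interior L →
      (0 : ℝ) ∈ {β : ℝ | w + β • (vk - w) ∈ L} ∧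
      (∀ β ∈ {β : ℝ | w + β • (vk - w) ∈ L}, β ≤ 1) ∧
      BddAbove {β : ℝ | w + β • (vk - w) ∈ L} ∧
      sSup {β : ℝ | w + β • (vk - w) ∈ L} ∈ {β : ℝ | w + β • (vk - w) ∈ L} := by
    intro w hw
    have h0 : (0 : ℝ) ∈ {β : ℝ | w + β • (vk - w) ∈ L} := by
      simpa [Set.mem_setOf_eq] using interior_subset hw
    have hle1 : ∀ β ∈ {β : ℝ | w + β • (vk - w) ∈ L}, β ≤ 1 := by
      intro β hβ
      by_contra hβ1
      push_neg at hβ1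
      have hβ0 : (0 : ℝ) < β := lt_trans one_pos hβ1
      apply hvk
      have heq : vk = (1 - 1/β) • w + (1/β) • (w + β • (vk - w)) := by
        have hβ' : β ≠ 0 := ne_of_gt hβ0
        rw [combo_smul]
        match_scalars <;> field_simp <;> ring
      rw [heq]
      exact hconv.combo_interior_self_mem_interior hw hβ
        (by rw [sub_pos, div_lt_one hβ0]; simpa using hβ1)
        (by positivity) (by ring)
    have hbdd : BddAbove {β : ℝ | w + β • (vk - w) ∈ L} := ⟨1, fun β hβ => hle1 β hβ⟩
    have hScl : IsClosed {β : ℝ | w + β • (vk - w) ∈ L} := hclosed.preimage (by fun_prop)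
    exact ⟨h0, hle1, hbdd, hScl.csSup_mem ⟨0, h0⟩ hbdd⟩
  have hvlmem : vl ∈ interior L :=
    hconv.interior.sum_mem (fun i _ => hlam i) hsum (fun i _ => hv i)
  obtain ⟨hl0, hlle1, hlbdd, hlmem⟩ := key vl hvlmem
  set bl : ℝ := sSup {β : ℝ | vl + β • (vk - vl) ∈ L} with hbl
  have hbl0 : 0 ≤ bl := le_csSup hlbdd hl0
  have hble1 : bl ≤ 1 := csSup_le ⟨0, hl0⟩ hlle1
  by_cases hvkL : vk ∈ L
  · -- then `bl = 1` and the point equals `vk`.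
    have h1mem : (1 : ℝ) ∈ {β : ℝ | vl + β • (vk - vl) ∈ L} := by
      simpa [Set.mem_setOf_eq] using hvkL
    have hbl1 : bl = 1 := le_antisymm hble1 (le_csSup hlbdd h1mem)
    have heq : vl + bl • (vk - vl) = vk := by rw [hbl1]; module
    rw [heq]
    exact subset_convexHull ℝ T (Set.mem_insert _ _)
  · -- `vk ∉ L` : all `b' i < 1`.
    set b' : Vin → ℝ := fun i => sSup {β : ℝ | v i + β • (vk - v i) ∈ L} with hb'
    set p : Vin → Fin n → ℝ := fun i => v i + b' i • (vk - v i) with hp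
    have hfacts : ∀ i : Vin, 0 ≤ b' i ∧ b' i < 1 ∧ p i ∈ L := by
      intro i
      obtain ⟨h0, hle1, hbdd, hmem⟩ := key (v i) (hv i)
      refine ⟨le_csSup hbdd h0, ?_, hmem⟩
      rcases lt_or_eq_of_le (csSup_le ⟨0, h0⟩ hle1) with h | h
      · exact h
      · exfalso
        apply hvkL
        have hvkp : v i + b' i • (vk - v i) = vk := by
          rw [hb']; simp only [h]; module
        rw [← hvkp]
        exact hmem
    set c : Vin → ℝ := fun i => lam i / (1 - b' i) with hc
    have hc0 : ∀ i, 0 ≤ c i := fun i =>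
      div_nonneg (hlam i) (by linarith [(hfacts i).2.1])
    have hcb : ∀ i, c i * (1 - b' i) = lam i := fun i =>
      div_mul_cancel₀ (lam i) (by linarith [(hfacts i).2.1])
    set S : ℝ := ∑ i, c i * b' i with hS
    have hS0 : 0 ≤ S := Finset.sum_nonneg fun i _ =>
      mul_nonneg (hc0 i) (hfacts i).1
    have hcsum : ∑ i, c i = 1 + S := by
      have hstep : ∀ i : Vin, c i = lam i + c i * b' i := fun i => by
        have := hcb i; nlinarith [hcb i]
      calc ∑ i, c i = ∑ i, (lam i + c i * b' i) :=
            Finset.sum_congr rfl fun i _ => hstep i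
        _ = (∑ i, lam i) + ∑ i, c i * b' i := Finset.sum_add_distrib
        _ = 1 + S := by rw [hsum, hS]
    have h1S : (0 : ℝ) < 1 + S := by linarith
    -- generic expansion of convex combinations of the points `p i`
    have hgen : ∀ t : ℝ, ∑ i, (c i * t) • p i
        = (∑ i, (t * lam i) • v i) + (t * S) • vk := by
      intro t
      have hterm : ∀ i : Vin, (c i * t) • p i
          = (t * lam i) • v i + (c i * t * b' i) • vk := by
        intro i
        rw [hp, combo_smul]
        congr 2
        rw [show c i * t * (1 - b' i) = t * (c i * (1 - b' i)) by ring, hcb i]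
      calc ∑ i, (c i * t) • p i
          = ∑ i, ((t * lam i) • v i + (c i * t * b' i) • vk) :=
            Finset.sum_congr rfl fun i _ => hterm i
        _ = (∑ i, (t * lam i) • v i) + ∑ i, (c i * t * b' i) • vk :=
            Finset.sum_add_distrib
        _ = (∑ i, (t * lam i) • v i) + (∑ i, c i * t * b' i) • vk := by
            rw [Finset.sum_smul]
        _ = (∑ i, (t * lam i) • v i) + (t * S) • vk := by
            congr 1
            rw [show (∑ i, c i * t * b' i) = t * ∑ i, c i * b' i by
              rw [Finset.mul_sum]; exact Finset.sum_congr rfl fun i _ => by ring, ← hS]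
    have hlhs : ∀ s : ℝ, vl + s • (vk - vl)
        = (∑ i, ((1 - s) * lam i) • v i) + s • vk := by
      intro s
      have h1 : vl + s • (vk - vl) = (1 - s) • vl + s • vk := by module
      rw [h1, hvl, Finset.smul_sum]
      congr 1
      exact Finset.sum_congr rfl fun i _ => by rw [smul_smul]
    set β0 : ℝ := S / (1 + S) with hβ0
    have h1mβ0 : 1 - β0 = 1 / (1 + S) := by rw [hβ0]; field_simp; ring
    -- the point at parameter β0 is a convex combination of the `p i`, hence in `L`.
    have hkey : vl + β0 • (vk - vl) = ∑ i, (c i * (1 / (1 + S))) • p i := by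
      rw [hgen, hlhs β0, h1mβ0]
      congr 1
      rw [show 1 / (1 + S) * S = β0 by rw [hβ0]; ring]
    have hβ0mem : β0 ∈ {β : ℝ | vl + β • (vk - vl) ∈ L} := by
      rw [Set.mem_setOf_eq, hkey]
      refine hconv.sum_mem (fun i _ => mul_nonneg (hc0 i) (by positivity)) ?_
        (fun i _ => (hfacts i).2.2)
      rw [← Finset.sum_mul, hcsum, mul_one_div, div_self (ne_of_gt h1S)]
    have hβ0bl : β0 ≤ bl := le_csSup hlbdd hβ0mem
    -- coefficients of the final convex combination
    set al : ℝ := bl - (1 - bl) * S with hal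
    have hal0 : 0 ≤ al := by
      have : S ≤ bl * (1 + S) := (div_le_iff₀ h1S).mp hβ0bl
      rw [hal]; nlinarith
    set f : Option Vin → ℝ := fun o => o.elim al (fun i => c i * (1 - bl)) with hf
    set g : Option Vin → Fin n → ℝ := fun o => o.elim vk p with hg
    have hf0 : ∀ o : Option Vin, 0 ≤ f o := by
      rintro (_ | i)
      · exact hal0
      · exact mul_nonneg (hc0 i) (by linarith)
    have hfsum : ∑ o : Option Vin, f o = 1 := by
      rw [Fintype.sum_option]
      show al + (∑ i : Vin, c i * (1 - bl)) = 1
      rw [← Finset.sum_mul, hcsum, hal]; ring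
    have hgT : ∀ o : Option Vin, g o ∈ convexHull ℝ T := by
      rintro (_ | i)
      · exact subset_convexHull ℝ T (Set.mem_insert _ _)
      · refine subset_convexHull ℝ T (Set.mem_insert_iff.mpr (Or.inr ?_))
        exact ⟨i, rfl⟩
    have hfinal : vl + bl • (vk - vl) = ∑ o : Option Vin, f o • g o := by
      rw [Fintype.sum_option]
      show vl + bl • (vk - vl) = al • vk + ∑ i, (c i * (1 - bl)) • p i
      rw [hgen (1 - bl), hlhs bl]
      have hblsplit : bl • vk = al • vk + ((1 - bl) * S) • vk := by
        rw [← add_smul]; congr 1; rw [hal]; ring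
      rw [hblsplit]
      abel
    rw [hfinal]
    exact (convex_convexHull ℝ T).sum_mem (fun o _ => hf0 o) hfsum (fun o _ => hgT o)
end

section
/- Fix a mixed integer split polyhedron L with V^in(L) ≠ ∅ and a convex combination λ supported on V^in(L). Let P^l(λ) = {(x, ε, μ) : x = v_λ + Σ_{k∈V^out(L)} ε_k (v^k − v_λ) + Σ_{j∈E} μ_j r^j, ε ≥ 0, Σ_k ε_k ≤ 1, μ ≥ 0}. Then conv({(x,ε,μ) ∈ P^l(λ) : x ∉ int(L)}) = {(x,ε,μ) ∈ P^l(λ) : Σ_{j∈E} μ_j/α_j(L,λ) + Σ_{k∈V^out(L)} ε_k/β_k(L,λ) ≥ 1}, i.e., Balas's intersection cut gives a complete description of the lifted relaxation. -/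
open Classical in
/-- Reciprocal of `sup S` with the convention `1/∞ = 0` (used for the
intersection-cut coefficients `1/α_j(L,λ)`). -/
noncomputable def invSup (S : Set ℝ) : ℝ :=
  if BddAbove S then (sSup S)⁻¹ else 0

section Aux

variable {n : ℕ} {L : Set (Fin n → ℝ)}

/-- A two-sided recession (lineality) direction. -/
def LinDir (L : Set (Fin n → ℝ)) (d : Fin n → ℝ) : Prop :=
  ∀ x ∈ L, ∀ t : ℝ, x + t • d ∈ L

theorem poly_convex (h : IsPolyhedron L) : Convex ℝ L := by
  obtain ⟨m, A, b, rfl⟩ := h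
  intro x hx y hy a c ha hc hac i
  have hexp : ∑ j, A i j * (a • x + c • y) j
      = a * ∑ j, A i j * x j + c * ∑ j, A i j * y j := by
    rw [Finset.mul_sum, Finset.mul_sum, ← Finset.sum_add_distrib]
    refine Finset.sum_congr rfl fun j _ => ?_
    simp only [Pi.add_apply, Pi.smul_apply, smul_eq_mul]
    ring
  rw [Set.mem_setOf_eq] at hx hy
  calc ∑ j, A i j * (a • x + c • y) j
      = a * ∑ j, A i j * x j + c * ∑ j, A i j * y j := hexp
    _ ≤ a * b i + c * b i :=
        add_le_add (mul_le_mul_of_nonneg_left (hx i) ha)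
          (mul_le_mul_of_nonneg_left (hy i) hc)
    _ = b i := by rw [← add_mul, hac, one_mul]

theorem poly_closed (h : IsPolyhedron L) : IsClosed L := by
  obtain ⟨m, A, b, rfl⟩ := h
  have : {x : Fin n → ℝ | ∀ i, ∑ j, A i j * x j ≤ b i}
      = ⋂ i, {x | ∑ j, A i j * x j ≤ b i} := by
    ext x; simp [Set.mem_iInter]
  rw [this]
  exact isClosed_iInter fun i =>
    isClosed_le (by
      exact continuous_finset_sum _ fun j _ => continuous_const.mul (continuous_apply j))
      continuous_const

theorem linDir_mem_interior {d : Fin n → ℝ} (hd : LinDir L d) {x : Fin n → ℝ}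
    (hx : x ∈ interior L) : x + d ∈ interior L := by
  have himg : (fun y => y + d) '' interior L ⊆ L := by
    rintro _ ⟨y, hy, rfl⟩
    simpa using hd y (interior_subset hy) 1
  have hopen : IsOpen ((fun y => y + d) '' interior L) :=
    (Homeomorph.addRight d).isOpenMap _ isOpen_interior
  exact interior_maximal himg hopen ⟨x, hx, rfl⟩

theorem linDir_neg {d : Fin n → ℝ} (hd : LinDir L d) : LinDir L (-d) := by
  intro x hx t
  simpa [smul_neg] using hd x hx (-t)

theorem linDir_not_interior {d : Fin n → ℝ} (hd : LinDir L d) {x : Fin n → ℝ}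
    (hx : x ∉ interior L) : x + d ∉ interior L := by
  intro h
  exact hx (by simpa using linDir_mem_interior (linDir_neg hd) h)

theorem linDir_zero : LinDir L 0 := by intro x hx t; simpa using hx

theorem linDir_add {d e : Fin n → ℝ} (hd : LinDir L d) (he : LinDir L e) :
    LinDir L (d + e) := by
  intro x hx t
  have h1 := hd x hx t
  have := he (x + t • d) h1 t
  simpa [smul_add, add_assoc] using this

theorem linDir_smul {d : Fin n → ℝ} (c : ℝ) (hd : LinDir L d) : LinDir L (c • d) := by
  intro x hx t
  simpa [smul_smul] using hd x hx (t * c)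

theorem linDir_sum {ι : Type*} [Fintype ι] (f : ι → Fin n → ℝ)
    (hf : ∀ j, LinDir L (f j)) : LinDir L (∑ j, f j) := by
  classical
  have : ∀ s : Finset ι, LinDir L (∑ j ∈ s, f j) := by
    intro s
    induction s using Finset.induction with
    | empty => simpa using (linDir_zero (L := L))
    | insert _ _ hni ih => rw [Finset.sum_insert hni]; exact linDir_add (hf _) ih
  exact this Finset.univ

theorem ray_lin_of_unbounded (hpoly : IsPolyhedron L)
    (hlin : ∀ d : Fin n → ℝ, (∀ x ∈ L, ∀ t : ℝ, 0 ≤ t → x + t • d ∈ L) →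
      ∀ x ∈ L, ∀ t : ℝ, 0 ≤ t → x - t • d ∈ L)
    {vlam d : Fin n → ℝ} (h0 : vlam ∈ L)
    (hub : ¬ BddAbove {t : ℝ | 0 ≤ t ∧ vlam + t • d ∈ L}) : LinDir L d := by
  obtain ⟨m, A, b, hL⟩ := hpoly
  have hexp : ∀ (x : Fin n → ℝ) (t : ℝ),
      ∀ i, ∑ j, A i j * (x + t • d) j = ∑ j, A i j * x j + t * ∑ j, A i j * d j := by
    intro x t i
    rw [Finset.mul_sum, ← Finset.sum_add_distrib]
    refine Finset.sum_congr rfl fun j _ => ?_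
    simp only [Pi.add_apply, Pi.smul_apply, smul_eq_mul]
    ring
  have hAd : ∀ i, ∑ j, A i j * d j ≤ 0 := by
    intro i
    by_contra hp
    push_neg at hp
    apply hub
    refine ⟨(b i - ∑ j, A i j * vlam j) / (∑ j, A i j * d j), ?_⟩
    rintro t ⟨ht0, htL⟩
    rw [hL] at htL
    have h1 := htL i
    rw [hexp vlam t i] at h1
    rw [le_div_iff₀ hp]
    linarith
  have hrec : ∀ x ∈ L, ∀ t : ℝ, 0 ≤ t → x + t • d ∈ L := by
    intro x hx t ht
    rw [hL] at hx ⊢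
    intro i
    rw [hexp x t i]
    have := mul_nonpos_of_nonneg_of_nonpos ht (hAd i)
    have hxi := hx i
    linarith
  have hneg := hlin d hrec
  intro x hx t
  rcases le_or_gt 0 t with h | h
  · exact hrec x hx t h
  · have := hneg x hx (-t) (by linarith)
    simpa [neg_smul, sub_neg_eq_add] using this

theorem ray_escape (hpoly : IsPolyhedron L) {vlam d : Fin n → ℝ} (h0 : vlam ∈ L)
    (hb : BddAbove {t : ℝ | 0 ≤ t ∧ vlam + t • d ∈ L}) (x0 : Fin n → ℝ) :
    ∃ T : ℝ, ∀ t : ℝ, T ≤ t → x0 + t • d ∉ L := by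
  obtain ⟨m, A, b, hL⟩ := hpoly
  have hexp : ∀ (x : Fin n → ℝ) (t : ℝ),
      ∀ i, ∑ j, A i j * (x + t • d) j = ∑ j, A i j * x j + t * ∑ j, A i j * d j := by
    intro x t i
    rw [Finset.mul_sum, ← Finset.sum_add_distrib]
    refine Finset.sum_congr rfl fun j _ => ?_
    simp only [Pi.add_apply, Pi.smul_apply, smul_eq_mul]
    ring
  have hAd : ∃ i, 0 < ∑ j, A i j * d j := by
    by_contra hp
    push_neg at hp
    obtain ⟨u, hu⟩ := hb
    have hmem : max 0 (u + 1) ∈ {t : ℝ | 0 ≤ t ∧ vlam + t • d ∈ L} := by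
      refine ⟨le_max_left _ _, ?_⟩
      rw [hL]
      intro i
      rw [hexp vlam _ i]
      have h1 : max 0 (u+1) * ∑ j, A i j * d j ≤ 0 :=
        mul_nonpos_of_nonneg_of_nonpos (le_max_left _ _) (hp i)
      have h2 : ∑ j, A i j * vlam j ≤ b i := by rw [hL] at h0; exact h0 i
      linarith
    have := hu hmem
    have : u + 1 ≤ u := le_trans (le_max_right 0 (u+1)) this
    linarith
  obtain ⟨i, hi⟩ := hAd
  refine ⟨(b i - ∑ j, A i j * x0 j) / (∑ j, A i j * d j) + 1, ?_⟩
  intro t ht hmem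
  rw [hL] at hmem
  have h1 := hmem i
  rw [hexp x0 t i] at h1
  rw [div_add' _ _ _ (ne_of_gt hi)] at ht
  rw [div_le_iff₀ hi] at ht
  nlinarith

end Aux


section Sup
variable {n : ℕ} {L : Set (Fin n → ℝ)}

theorem ray_continuous (vlam d : Fin n → ℝ) : Continuous (fun t : ℝ => vlam + t • d) :=
  continuous_const.add (continuous_id.smul continuous_const)

theorem exists_pos_ray_interior {vlam : Fin n → ℝ} (d : Fin n → ℝ)
    (hint : vlam ∈ interior L) :
    ∃ t0 : ℝ, 0 < t0 ∧ vlam + t0 • d ∈ interior L := by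
  have hU : IsOpen {t : ℝ | vlam + t • d ∈ interior L} :=
    isOpen_interior.preimage (ray_continuous vlam d)
  have h0 : (0:ℝ) ∈ {t : ℝ | vlam + t • d ∈ interior L} := by simpa using hint
  obtain ⟨ε, hε, hball⟩ := Metric.isOpen_iff.mp hU 0 h0
  refine ⟨ε/2, by linarith, hball ?_⟩
  simp only [Metric.mem_ball, Real.dist_eq, sub_zero, abs_of_pos (half_pos hε)]
  linarith

theorem sup_ray_pos {vlam : Fin n → ℝ} (d : Fin n → ℝ) (hint : vlam ∈ interior L)
    (hb : BddAbove {t : ℝ | vlam + t • d ∈ L}) :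
    0 < sSup {t : ℝ | vlam + t • d ∈ L} := by
  obtain ⟨t0, ht0, hmem⟩ := exists_pos_ray_interior d hint
  refine lt_of_lt_of_le ht0 (le_csSup hb ?_)
  exact Set.mem_setOf_eq ▸ interior_subset hmem

theorem sup_ray_mem (hcl : IsClosed L) {vlam : Fin n → ℝ} (d : Fin n → ℝ)
    (hvL : vlam ∈ L) (hb : BddAbove {t : ℝ | vlam + t • d ∈ L}) :
    vlam + (sSup {t : ℝ | vlam + t • d ∈ L}) • d ∈ L := by
  have hclB : IsClosed {t : ℝ | vlam + t • d ∈ L} := hcl.preimage (ray_continuous vlam d)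
  exact hclB.csSup_mem ⟨0, by simpa using hvL⟩ hb

theorem sup_ray_not_interior {vlam : Fin n → ℝ} (d : Fin n → ℝ)
    (hb : BddAbove {t : ℝ | vlam + t • d ∈ L}) :
    ∀ c : ℝ, sSup {t : ℝ | vlam + t • d ∈ L} ≤ c → vlam + c • d ∉ interior L := by
  intro c hc hmem
  have hU : IsOpen {t : ℝ | vlam + t • d ∈ interior L} :=
    isOpen_interior.preimage (ray_continuous vlam d)
  obtain ⟨ε, hε, hball⟩ := Metric.isOpen_iff.mp hU c hmem
  have h2 : c + ε/2 ∈ {t : ℝ | vlam + t • d ∈ L} := by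
    have hin : c + ε/2 ∈ Metric.ball c ε := by
      simp only [Metric.mem_ball, Real.dist_eq, add_sub_cancel_left, abs_of_pos (half_pos hε)]
      linarith
    have hx := hball hin
    rw [Set.mem_setOf_eq] at hx
    exact Set.mem_setOf.mpr (interior_subset hx)
  have := le_csSup hb h2
  linarith

theorem sup_ray_le_one (hconv : Convex ℝ L) {vlam : Fin n → ℝ} (d : Fin n → ℝ)
    (hint : vlam ∈ interior L) (hout : vlam + d ∉ interior L)
    (hb : BddAbove {t : ℝ | vlam + t • d ∈ L}) (hvL : vlam ∈ L) :
    sSup {t : ℝ | vlam + t • d ∈ L} ≤ 1 := by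
  by_contra h
  push_neg at h
  obtain ⟨t', ht'mem, ht'⟩ := exists_lt_of_lt_csSup ⟨0, by simpa using hvL⟩ h
  have ht'0 : (0:ℝ) < t' := by linarith
  have heq : (1 - 1/t') • vlam + (1/t') • (vlam + t' • d) = vlam + d := by
    rw [smul_add, smul_smul, one_div_mul_cancel (ne_of_gt ht'0), ← add_assoc,
      ← add_smul, sub_add_cancel, one_smul, one_smul]
  have := hconv.combo_interior_self_mem_interior (a := 1 - 1/t') (b := 1/t') hint ht'mem
    (by rw [sub_pos]; rw [div_lt_one ht'0]; exact ht')
    (le_of_lt (by positivity)) (by ring)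
  rw [heq] at this
  exact hout this

theorem supS_pos {vlam : Fin n → ℝ} (d : Fin n → ℝ) (hint : vlam ∈ interior L)
    (hb : BddAbove {t : ℝ | 0 ≤ t ∧ vlam + t • d ∈ L}) :
    0 < sSup {t : ℝ | 0 ≤ t ∧ vlam + t • d ∈ L} := by
  obtain ⟨t0, ht0, hmem⟩ := exists_pos_ray_interior d hint
  exact lt_of_lt_of_le ht0 (le_csSup hb ⟨ht0.le, interior_subset hmem⟩)

theorem supS_mem (hcl : IsClosed L) {vlam : Fin n → ℝ} (d : Fin n → ℝ)
    (hvL : vlam ∈ L) (hb : BddAbove {t : ℝ | 0 ≤ t ∧ vlam + t • d ∈ L}) :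
    0 ≤ sSup {t : ℝ | 0 ≤ t ∧ vlam + t • d ∈ L} ∧
    vlam + (sSup {t : ℝ | 0 ≤ t ∧ vlam + t • d ∈ L}) • d ∈ L := by
  have hset : {t : ℝ | 0 ≤ t ∧ vlam + t • d ∈ L}
      = Set.Ici (0:ℝ) ∩ {t : ℝ | vlam + t • d ∈ L} := by
    ext t; simp [Set.mem_Ici, and_comm]
  have hclS : IsClosed {t : ℝ | 0 ≤ t ∧ vlam + t • d ∈ L} := by
    rw [hset]; exact isClosed_Ici.inter (hcl.preimage (ray_continuous vlam d))
  have := hclS.csSup_mem ⟨0, by simpa using hvL⟩ hb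
  exact ⟨this.1, this.2⟩

theorem supS_not_interior {vlam : Fin n → ℝ} (d : Fin n → ℝ) (hint : vlam ∈ interior L)
    (hb : BddAbove {t : ℝ | 0 ≤ t ∧ vlam + t • d ∈ L}) :
    ∀ c : ℝ, sSup {t : ℝ | 0 ≤ t ∧ vlam + t • d ∈ L} ≤ c → vlam + c • d ∉ interior L := by
  intro c hc hmem
  have hcpos : 0 < c := lt_of_lt_of_le (supS_pos d hint hb) hc
  have hU : IsOpen {t : ℝ | vlam + t • d ∈ interior L} :=
    isOpen_interior.preimage (ray_continuous vlam d)
  obtain ⟨ε, hε, hball⟩ := Metric.isOpen_iff.mp hU c hmem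
  have h2 : c + ε/2 ∈ {t : ℝ | 0 ≤ t ∧ vlam + t • d ∈ L} := by
    refine ⟨by linarith, ?_⟩
    have hin : c + ε/2 ∈ Metric.ball c ε := by
      simp only [Metric.mem_ball, Real.dist_eq, add_sub_cancel_left, abs_of_pos (half_pos hε)]
      linarith
    have hx := hball hin
    rw [Set.mem_setOf_eq] at hx
    exact Set.mem_setOf.mpr (interior_subset hx)
  have := le_csSup hb h2
  linarith

theorem combo_mem_interior {ι : Type*} (t : Finset ι) (hconv : Convex ℝ L)
    {p : Fin n → ℝ} (hp : p ∈ interior L)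
    (w : ι → ℝ) (q : ι → Fin n → ℝ) (hw : ∀ i ∈ t, 0 ≤ w i) (hq : ∀ i ∈ t, q i ∈ L)
    (c0 : ℝ) (hc0 : 0 < c0) (hsum : c0 + ∑ i ∈ t, w i = 1) :
    c0 • p + ∑ i ∈ t, w i • q i ∈ interior L := by
  rcases eq_or_lt_of_le (Finset.sum_nonneg hw) with h0 | hpos
  · have hall : ∀ i ∈ t, w i = 0 := (Finset.sum_eq_zero_iff_of_nonneg hw).mp h0.symm
    have hz : ∑ i ∈ t, w i • q i = 0 :=
      Finset.sum_eq_zero fun i hi => by rw [hall i hi, zero_smul]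
    have hc1 : c0 = 1 := by rw [← h0] at hsum; simpa using hsum
    rw [hz, add_zero, hc1, one_smul]
    exact hp
  · set W := ∑ i ∈ t, w i with hW
    have hWne : W ≠ 0 := ne_of_gt hpos
    have hqW : W⁻¹ • ∑ i ∈ t, w i • q i ∈ L := by
      have hmem := hconv.sum_mem (t := t) (w := fun i => w i / W) (z := q)
        (fun i hi => div_nonneg (hw i hi) hpos.le)
        (by rw [← Finset.sum_div]; exact div_self hWne) hq
      have : ∑ i ∈ t, (w i / W) • q i = W⁻¹ • ∑ i ∈ t, w i • q i := by
        rw [Finset.smul_sum]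
        exact Finset.sum_congr rfl fun i _ => by
          rw [smul_smul, div_eq_inv_mul]
      rwa [this] at hmem
    have hcombo := hconv.combo_interior_self_mem_interior hp hqW hc0 hpos.le hsum
    rwa [smul_smul, mul_inv_cancel₀ hWne, one_smul] at hcombo
theorem sum_single_smul {ι : Type*} [Fintype ι] [DecidableEq ι] {M : Type*}
    [AddCommMonoid M] [Module ℝ M] (k : ι) (c : ℝ) (w : ι → M) :
    ∑ k', (Pi.single k c : ι → ℝ) k' • w k' = c • w k := by
  rw [Finset.sum_eq_single k]
  · rw [Pi.single_eq_same]
  · intro k' _ hne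
    rw [Pi.single_eq_of_ne hne, zero_smul]
  · intro h; exact absurd (Finset.mem_univ k) h

theorem sum_mul_single {ι : Type*} [Fintype ι] [DecidableEq ι] (k' : ι) (lam c : ι → ℝ) :
    ∑ k, lam k * (Pi.single k (c k) : ι → ℝ) k' = lam k' * c k' := by
  rw [Finset.sum_eq_single k']
  · rw [Pi.single_eq_same]
  · intro k _ hne
    rw [Pi.single_eq_of_ne (Ne.symm hne), mul_zero]
  · intro h; exact absurd (Finset.mem_univ k') h

theorem prod_fst_sum {α β ι : Type*} [AddCommMonoid α] [AddCommMonoid β]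
    (s : Finset ι) (f : ι → α × β) : (∑ i ∈ s, f i).1 = ∑ i ∈ s, (f i).1 :=
  map_sum (AddMonoidHom.fst α β) f s

theorem prod_snd_sum {α β ι : Type*} [AddCommMonoid α] [AddCommMonoid β]
    (s : Finset ι) (f : ι → α × β) : (∑ i ∈ s, f i).2 = ∑ i ∈ s, (f i).2 :=
  map_sum (AddMonoidHom.snd α β) f s

theorem sum_combo_mul {ι : Type*} [Fintype ι] (f g c : ι → ℝ) (a b : ℝ) :
    ∑ i, (a * f i + b * g i) * c i = a * ∑ i, f i * c i + b * ∑ i, g i * c i := by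
  rw [Finset.mul_sum, Finset.mul_sum, ← Finset.sum_add_distrib]
  exact Finset.sum_congr rfl fun i _ => by ring

theorem sum_combo_smul {ι : Type*} [Fintype ι] {M : Type*}
    [AddCommMonoid M] [Module ℝ M] (ε1 ε2 : ι → ℝ) (a b : ℝ) (w : ι → M) :
    ∑ k, (a * ε1 k + b * ε2 k) • w k = a • ∑ k, ε1 k • w k + b • ∑ k, ε2 k • w k := by
  rw [Finset.smul_sum, Finset.smul_sum, ← Finset.sum_add_distrib]
  exact Finset.sum_congr rfl fun k _ => by rw [add_smul, smul_smul, smul_smul]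

end Sup


set_option maxHeartbeats 4000000 in
/-- Theorem `fixed_lambda_lem`: Balas's intersection cut gives a complete
description of the lifted relaxation `R^l(L, P(λ))`. -/
theorem stmt12 {n : ℕ} {Vout Eidx : Type*} [Fintype Vout] [Fintype Eidx]
    (L : Set (Fin n → ℝ)) (hpoly : IsPolyhedron L)
    (hlin : ∀ d : Fin n → ℝ, (∀ x ∈ L, ∀ t : ℝ, 0 ≤ t → x + t • d ∈ L) →
      ∀ x ∈ L, ∀ t : ℝ, 0 ≤ t → x - t • d ∈ L)
    (vlam : Fin n → ℝ) (hvlam : vlam ∈ interior L)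
    (v : Vout → Fin n → ℝ) (hvout : ∀ k, v k ∉ interior L)
    (r : Eidx → Fin n → ℝ)
    (Pl : Set ((Fin n → ℝ) × (Vout → ℝ) × (Eidx → ℝ)))
    (hPl : Pl = {z | z.1 = vlam + ∑ k, z.2.1 k • (v k - vlam) + ∑ j, z.2.2 j • r j ∧
      (∀ k, 0 ≤ z.2.1 k) ∧ (∑ k, z.2.1 k) ≤ 1 ∧ ∀ j, 0 ≤ z.2.2 j}) :
    convexHull ℝ {z ∈ Pl | z.1 ∉ interior L} =
      {z ∈ Pl |
        1 ≤ (∑ j, z.2.2 j * invSup {α : ℝ | 0 ≤ α ∧ vlam + α • r j ∈ L}) +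
          ∑ k, z.2.1 k / sSup {β : ℝ | vlam + β • (v k - vlam) ∈ L}} := by
  classical
  have hconv : Convex ℝ L := poly_convex hpoly
  have hcl : IsClosed L := poly_closed hpoly
  have hvL : vlam ∈ L := interior_subset hvlam
  obtain ⟨ρ, hρ⟩ : ∃ ρf : Eidx → ℝ,
      ∀ j, ρf j = invSup {α : ℝ | 0 ≤ α ∧ vlam + α • r j ∈ L} := ⟨_, fun _ => rfl⟩
  obtain ⟨Bk, hBk⟩ : ∃ Bf : Vout → ℝ,
      ∀ k, Bf k = sSup {β : ℝ | vlam + β • (v k - vlam) ∈ L} := ⟨_, fun _ => rfl⟩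
  set D := {z ∈ Pl | z.1 ∉ interior L} with hD
  -- basic facts about Bk
  have hBb : ∀ k, BddAbove {β : ℝ | vlam + β • (v k - vlam) ∈ L} := by
    intro k
    have hS : BddAbove {t : ℝ | 0 ≤ t ∧ vlam + t • (v k - vlam) ∈ L} := by
      by_contra hub
      have hlind := ray_lin_of_unbounded hpoly hlin hvL hub
      have := linDir_mem_interior hlind hvlam
      rw [add_sub_cancel] at this
      exact hvout k this
    obtain ⟨u, hu⟩ := hS
    refine ⟨max u 0, ?_⟩
    intro t ht
    rcases le_or_gt t 0 with h | h
    · exact le_trans h (le_max_right u 0)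
    · exact le_trans (hu ⟨h.le, ht⟩) (le_max_left u 0)
  have hBpos : ∀ k, 0 < Bk k := fun k => by
    rw [hBk]; exact sup_ray_pos _ hvlam (hBb k)
  have hBle1 : ∀ k, Bk k ≤ 1 := fun k => by
    rw [hBk]
    refine sup_ray_le_one hconv _ hvlam ?_ (hBb k) hvL
    rw [add_sub_cancel]
    exact hvout k
  have hBmem : ∀ k, vlam + (Bk k) • (v k - vlam) ∈ L := fun k => by
    rw [hBk]; exact sup_ray_mem hcl _ hvL (hBb k)
  have hBnotint : ∀ k, ∀ c : ℝ, Bk k ≤ c → vlam + c • (v k - vlam) ∉ interior L := by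
    intro k c hc
    exact sup_ray_not_interior _ (hBb k) c (by rw [hBk] at hc; exact hc)
  -- basic facts about ρ
  have hρ0 : ∀ j, 0 ≤ ρ j := by
    intro j
    rw [hρ, invSup]
    split
    · rename_i hb
      exact inv_nonneg.mpr (le_of_lt (supS_pos _ hvlam hb))
    · exact le_rfl
  have hρbdd : ∀ j, BddAbove {α : ℝ | 0 ≤ α ∧ vlam + α • r j ∈ L} →
      ρ j = (sSup {α : ℝ | 0 ≤ α ∧ vlam + α • r j ∈ L})⁻¹ := by
    intro j hb; rw [hρ, invSup, if_pos hb]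
  have hρubd : ∀ j, ¬ BddAbove {α : ℝ | 0 ≤ α ∧ vlam + α • r j ∈ L} → ρ j = 0 := by
    intro j hb; rw [hρ, invSup, if_neg hb]
  -- Pl is convex and second components determine membership
  have hPlconv : Convex ℝ Pl := by
    rw [hPl]
    rintro z1 ⟨h1x, h1n, h1s, h1m⟩ z2 ⟨h2x, h2n, h2s, h2m⟩ a b ha hb hab
    obtain rfl : b = 1 - a := by linarith
    refine ⟨?_, ?_, ?_, ?_⟩
    · show a • z1.1 + (1-a) • z2.1 = vlam + ∑ k, (a * z1.2.1 k + (1-a) * z2.2.1 k) • (v k - vlam)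
        + ∑ j, (a * z1.2.2 j + (1-a) * z2.2.2 j) • r j
      rw [h1x, h2x, sum_combo_smul z1.2.1 z2.2.1 a (1-a) (fun k => v k - vlam),
        sum_combo_smul z1.2.2 z2.2.2 a (1-a) r]
      module
    · intro k
      exact add_nonneg (mul_nonneg ha (h1n k)) (mul_nonneg (by linarith) (h2n k))
    · show (∑ k, (a * z1.2.1 k + (1-a) * z2.2.1 k)) ≤ 1
      rw [Finset.sum_add_distrib, ← Finset.mul_sum, ← Finset.mul_sum]
      nlinarith [h1s, h2s]
    · intro j
      exact add_nonneg (mul_nonneg ha (h1m j)) (mul_nonneg (by linarith) (h2m j))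
  have hPl_ext : ∀ z1 z2 : (Fin n → ℝ) × (Vout → ℝ) × (Eidx → ℝ),
      z1 ∈ Pl → z2 ∈ Pl → z1.2 = z2.2 → z1 = z2 := by
    rw [hPl]
    rintro ⟨x1, w1⟩ ⟨x2, w2⟩ ⟨h1x, -⟩ ⟨h2x, -⟩ hsnd
    simp only at hsnd
    subst hsnd
    simp only [Prod.mk.injEq, and_true]
    exact h1x.trans h2x.symm
  have hDPl : convexHull ℝ D ⊆ Pl := by
    rw [← hPlconv.convexHull_eq]
    exact convexHull_mono (fun z hz => hz.1)
  -- single-vertex pieces lie in the convex hull of D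
  have vertexPiece : ∀ (k : Vout) (c : ℝ), Bk k ≤ c → c ≤ 1 →
      ∀ ν : Eidx → ℝ, (∀ j, 0 ≤ ν j) →
      (vlam + c • (v k - vlam) + ∑ j, ν j • r j, Pi.single k c, ν) ∈ convexHull ℝ D := by
    intro k c hc1 hc2 ν hν
    have hc0 : 0 ≤ c := le_trans (hBpos k).le hc1
    have hPlmem : ∀ (cc : ℝ) (m : Eidx → ℝ), 0 ≤ cc → cc ≤ 1 → (∀ j, 0 ≤ m j) →
        (vlam + cc • (v k - vlam) + ∑ j, m j • r j, Pi.single k cc, m) ∈ Pl := by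
      intro cc m h0 h1 hm0
      rw [hPl]
      refine ⟨?_, ?_, ?_, fun j => hm0 j⟩
      · show vlam + cc • (v k - vlam) + ∑ j, m j • r j
          = vlam + (∑ k', (Pi.single k cc : Vout → ℝ) k' • (v k' - vlam)) + ∑ j, m j • r j
        rw [sum_single_smul]
      · intro k'
        show 0 ≤ (Pi.single k cc : Vout → ℝ) k'
        rw [Pi.single_apply]
        split
        · exact h0
        · exact le_rfl
      · show (∑ k', (Pi.single k cc : Vout → ℝ) k') ≤ 1
        rw [Finset.sum_pi_single']
        rw [if_pos (Finset.mem_univ k)]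
        exact h1
    obtain ⟨ν1, hν1⟩ : ∃ f : Eidx → ℝ, ∀ j, f j =
        if BddAbove {α : ℝ | 0 ≤ α ∧ vlam + α • r j ∈ L} then ν j else 0 :=
      ⟨_, fun _ => rfl⟩
    obtain ⟨ν2, hν2⟩ : ∃ f : Eidx → ℝ, ∀ j, f j =
        if BddAbove {α : ℝ | 0 ≤ α ∧ vlam + α • r j ∈ L} then 0 else ν j :=
      ⟨_, fun _ => rfl⟩
    have hν1n : ∀ j, 0 ≤ ν1 j := fun j => by rw [hν1]; split; exacts [hν j, le_rfl]
    have hν2n : ∀ j, 0 ≤ ν2 j := fun j => by rw [hν2]; split; exacts [le_rfl, hν j]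
    have hνsplit : ∀ j, ν j = ν1 j + ν2 j := fun j => by
      rw [hν1, hν2]; split <;> simp
    have hsplitsum : ∑ j, ν j • r j = (∑ j, ν2 j • r j) + ∑ j, ν1 j • r j := by
      rw [← Finset.sum_add_distrib]
      exact Finset.sum_congr rfl fun j _ => by rw [hνsplit j, add_smul]; abel
    have hlinν2 : LinDir L (∑ j, ν2 j • r j) := by
      refine linDir_sum _ fun j => ?_
      rw [hν2]
      split
      · rw [zero_smul]; exact linDir_zero
      · rename_i h
        exact linDir_smul _ (ray_lin_of_unbounded hpoly hlin hvL h)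
    have hbase : vlam + c • (v k - vlam) + ∑ j, ν2 j • r j ∉ interior L :=
      linDir_not_interior hlinν2 (hBnotint k c hc1)
    by_cases hbb : BddAbove {t : ℝ | 0 ≤ t ∧ vlam + t • (∑ j, ν1 j • r j) ∈ L}
    · -- the bounded part escapes L when pushed far enough
      obtain ⟨T, hT⟩ := ray_escape hpoly hvL hbb (vlam + c • (v k - vlam) + ∑ j, ν2 j • r j)
      have hCc1 : (1:ℝ) ≤ max 1 T := le_max_left _ _
      have hCc0 : (0:ℝ) < max 1 T := lt_of_lt_of_le one_pos hCc1
      have hp1 : (vlam + c • (v k - vlam) + ∑ j, ν2 j • r j, Pi.single k c, ν2) ∈ D :=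
        ⟨hPlmem c ν2 hc0 hc2 hν2n, hbase⟩
      have hp2x : vlam + c • (v k - vlam) + ∑ j, ((max 1 T) * ν1 j + ν2 j) • r j
          = (vlam + c • (v k - vlam) + ∑ j, ν2 j • r j)
            + (max 1 T) • (∑ j, ν1 j • r j) := by
        rw [Finset.smul_sum]
        have : ∑ j, ((max 1 T) * ν1 j + ν2 j) • r j
            = ∑ j, (ν2 j • r j + (max 1 T) • (ν1 j • r j)) := by
          refine Finset.sum_congr rfl fun j _ => ?_
          rw [add_smul, smul_smul]
          abel
        rw [this, Finset.sum_add_distrib]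
        abel
      have hp2 : (vlam + c • (v k - vlam) + ∑ j, ((max 1 T) * ν1 j + ν2 j) • r j,
          Pi.single k c, fun j => (max 1 T) * ν1 j + ν2 j) ∈ D := by
        refine ⟨hPlmem c _ hc0 hc2
          (fun j => add_nonneg (mul_nonneg hCc0.le (hν1n j)) (hν2n j)), ?_⟩
        show vlam + c • (v k - vlam) + ∑ j, ((max 1 T) * ν1 j + ν2 j) • r j ∉ interior L
        rw [hp2x]
        intro hmem
        exact hT _ (le_max_right 1 T) (interior_subset hmem)
      have hw2 : (0:ℝ) ≤ (max 1 T)⁻¹ := inv_nonneg.mpr hCc0.le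
      have hw1 : (0:ℝ) ≤ 1 - (max 1 T)⁻¹ := by
        have := inv_le_one_of_one_le₀ hCc1
        linarith
      have hwsum : (1 - (max 1 T)⁻¹) + (max 1 T)⁻¹ = 1 := by ring
      have hcombo := (convex_convexHull ℝ D) (subset_convexHull ℝ D hp1)
        (subset_convexHull ℝ D hp2) hw1 hw2 hwsum
      have heqz : (vlam + c • (v k - vlam) + ∑ j, ν j • r j,
            (Pi.single k c : Vout → ℝ), ν)
          = (1 - (max 1 T)⁻¹) • (vlam + c • (v k - vlam) + ∑ j, ν2 j • r j,
              (Pi.single k c : Vout → ℝ), ν2)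
            + (max 1 T)⁻¹ • (vlam + c • (v k - vlam)
                + ∑ j, ((max 1 T) * ν1 j + ν2 j) • r j,
              (Pi.single k c : Vout → ℝ), fun j => (max 1 T) * ν1 j + ν2 j) := by
        apply hPl_ext
        · exact hPlmem c ν hc0 hc2 hν
        · exact hPlconv hp1.1 hp2.1 hw1 hw2 hwsum
        · refine Prod.ext ?_ ?_
          · show (Pi.single k c : Vout → ℝ)
              = (1 - (max 1 T)⁻¹) • (Pi.single k c : Vout → ℝ)
                + (max 1 T)⁻¹ • (Pi.single k c : Vout → ℝ)
            rw [← add_smul, hwsum, one_smul]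
          · show ν = (1 - (max 1 T)⁻¹) • ν2
              + (max 1 T)⁻¹ • (fun j => (max 1 T) * ν1 j + ν2 j)
            funext j
            show ν j = (1 - (max 1 T)⁻¹) * ν2 j + (max 1 T)⁻¹ * ((max 1 T) * ν1 j + ν2 j)
            rw [hνsplit j]
            field_simp
            ring
      rw [heqz]
      exact hcombo
    · -- the bounded part is a lineality direction
      have hlinν1 : LinDir L (∑ j, ν1 j • r j) :=
        ray_lin_of_unbounded hpoly hlin hvL hbb
      refine subset_convexHull ℝ D ⟨hPlmem c ν hc0 hc2 hν, ?_⟩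
      show vlam + c • (v k - vlam) + ∑ j, ν j • r j ∉ interior L
      rw [hsplitsum, ← add_assoc]
      exact linDir_not_interior hlinν1 hbase
  -- pure-ray pieces satisfying the cut with ε = 0 lie in the hull
  have zeroPiece : ∀ ν : Eidx → ℝ, (∀ j, 0 ≤ ν j) → 1 ≤ ∑ j, ν j * ρ j →
      (vlam + ∑ j, ν j • r j, (0 : Vout → ℝ), ν) ∈ convexHull ℝ D := by
    intro ν hν hs0
    have hterm0 : ∀ j, 0 ≤ ν j * ρ j := fun j => mul_nonneg (hν j) (hρ0 j)
    have hs0pos : 0 < ∑ j, ν j * ρ j := lt_of_lt_of_le one_pos hs0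
    obtain ⟨ν2, hν2⟩ : ∃ f : Eidx → ℝ, ∀ j, f j =
        if BddAbove {α : ℝ | 0 ≤ α ∧ vlam + α • r j ∈ L} then 0 else ν j :=
      ⟨_, fun _ => rfl⟩
    have hν2n : ∀ j, 0 ≤ ν2 j := fun j => by rw [hν2]; split; exacts [le_rfl, hν j]
    have hlinν2 : LinDir L (∑ j, ν2 j • r j) := by
      refine linDir_sum _ fun j => ?_
      rw [hν2]
      split
      · rw [zero_smul]; exact linDir_zero
      · rename_i h
        exact linDir_smul _ (ray_lin_of_unbounded hpoly hlin hvL h)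
    obtain ⟨j0, hj0⟩ : ∃ j0, 0 < ν j0 * ρ j0 := by
      by_contra h
      push_neg at h
      have := Finset.sum_nonpos (fun j (_ : j ∈ Finset.univ) => h j)
      linarith
    obtain ⟨CA, hCA⟩ : ∃ f : Eidx → ℝ, ∀ j, f j = (∑ j', ν j' * ρ j')
        * sSup {α : ℝ | 0 ≤ α ∧ vlam + α • r j ∈ L} := ⟨_, fun _ => rfl⟩
    obtain ⟨pm, hpm⟩ : ∃ pm : Eidx → Eidx → ℝ, ∀ j j', pm j j'
        = (Pi.single j (CA j) : Eidx → ℝ) j' + ν2 j' := ⟨_, fun _ _ => rfl⟩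
    have hPlmem0 : ∀ (m : Eidx → ℝ), (∀ j, 0 ≤ m j) →
        (vlam + ∑ j', m j' • r j', (0 : Vout → ℝ), m) ∈ Pl := by
      intro m hm
      rw [hPl]
      exact ⟨by simp, fun k => le_rfl, by simp, hm⟩
    have hxpm : ∀ j, vlam + ∑ j', pm j j' • r j'
        = (vlam + CA j • r j) + ∑ j', ν2 j' • r j' := by
      intro j
      have h1 : ∑ j', pm j j' • r j' = CA j • r j + ∑ j', ν2 j' • r j' := by
        rw [Finset.sum_congr rfl fun j' _ => by rw [hpm j j', add_smul],
          Finset.sum_add_distrib, sum_single_smul]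
      rw [h1]
      abel
    have hpD : ∀ j, 0 < ν j * ρ j →
        (vlam + ∑ j', pm j j' • r j', (0 : Vout → ℝ), pm j) ∈ D := by
      intro j hj
      have hbdd : BddAbove {α : ℝ | 0 ≤ α ∧ vlam + α • r j ∈ L} := by
        by_contra hb
        rw [hρubd j hb, mul_zero] at hj
        exact lt_irrefl 0 hj
      have hA0 : 0 < sSup {α : ℝ | 0 ≤ α ∧ vlam + α • r j ∈ L} := supS_pos _ hvlam hbdd
      have hCAn : 0 ≤ CA j := by rw [hCA]; exact mul_nonneg hs0pos.le hA0.le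
      refine ⟨hPlmem0 _ (fun j' => ?_), ?_⟩
      · rw [hpm j j']
        refine add_nonneg ?_ (hν2n j')
        rw [Pi.single_apply]
        split
        · exact hCAn
        · exact le_rfl
      · show vlam + ∑ j', pm j j' • r j' ∉ interior L
        rw [hxpm j]
        refine linDir_not_interior hlinν2 (supS_not_interior _ hvlam hbdd _ ?_)
        rw [hCA]
        nlinarith
    obtain ⟨P, hP⟩ : ∃ P : Eidx → (Fin n → ℝ) × (Vout → ℝ) × (Eidx → ℝ), ∀ j, P j =
        if 0 < ν j * ρ j then (vlam + ∑ j', pm j j' • r j', (0 : Vout → ℝ), pm j)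
        else (vlam + ∑ j', pm j0 j' • r j', (0 : Vout → ℝ), pm j0) := ⟨_, fun _ => rfl⟩
    have hPD : ∀ j, P j ∈ D := by
      intro j
      rw [hP]
      split
      · rename_i h; exact hpD j h
      · exact hpD j0 hj0
    obtain ⟨w, hw⟩ : ∃ w : Eidx → ℝ, ∀ j, w j = ν j * ρ j / (∑ j', ν j' * ρ j') :=
      ⟨_, fun _ => rfl⟩
    have hwn : ∀ j, 0 ≤ w j := fun j => by
      rw [hw]; exact div_nonneg (hterm0 j) hs0pos.le
    have hwsum : ∑ j, w j = 1 := by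
      rw [Finset.sum_congr rfl fun j _ => hw j, ← Finset.sum_div]
      exact div_self (ne_of_gt hs0pos)
    have hPsum : ∑ j, w j • P j
        = ∑ j, w j • (vlam + ∑ j', pm j j' • r j', (0 : Vout → ℝ), pm j) := by
      refine Finset.sum_congr rfl fun j _ => ?_
      rw [hP]
      split
      · rfl
      · rename_i h
        have hz : ν j * ρ j = 0 := le_antisymm (not_lt.mp h) (hterm0 j)
        rw [hw, hz, zero_div, zero_smul, zero_smul]
    have hmem : ∑ j, w j • P j ∈ convexHull ℝ D :=
      (convex_convexHull ℝ D).sum_mem (fun j _ => hwn j) hwsum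
        (fun j _ => subset_convexHull ℝ D (hPD j))
    have heq : (vlam + ∑ j, ν j • r j, (0 : Vout → ℝ), ν) = ∑ j, w j • P j := by
      apply hPl_ext
      · exact hPlmem0 ν hν
      · exact hPlconv.sum_mem (fun j _ => hwn j) hwsum (fun j _ => (hPD j).1)
      · rw [hPsum]
        refine Prod.ext ?_ ?_
        · show (0 : Vout → ℝ) = (∑ j, w j •
            (vlam + ∑ j', pm j j' • r j', (0 : Vout → ℝ), pm j)).2.1
          rw [prod_snd_sum, prod_fst_sum]
          symm
          refine Finset.sum_eq_zero fun j _ => ?_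
          show w j • (0 : Vout → ℝ) = 0
          rw [smul_zero]
        · show ν = (∑ j, w j •
            (vlam + ∑ j', pm j j' • r j', (0 : Vout → ℝ), pm j)).2.2
          rw [prod_snd_sum, prod_snd_sum]
          simp only [Prod.smul_snd]
          funext j'
          rw [Finset.sum_apply]
          have hterm : ∀ j, (w j • pm j) j'
              = w j * ((Pi.single j (CA j) : Eidx → ℝ) j') + w j * ν2 j' := by
            intro j
            show w j * pm j j' = _
            rw [hpm j j', mul_add]
          rw [Finset.sum_congr rfl fun j _ => hterm j, Finset.sum_add_distrib,
            ← Finset.sum_mul, hwsum, one_mul, sum_mul_single j' w CA]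
          by_cases hbdd : BddAbove {α : ℝ | 0 ≤ α ∧ vlam + α • r j' ∈ L}
          · have hA0 : 0 < sSup {α : ℝ | 0 ≤ α ∧ vlam + α • r j' ∈ L} :=
              supS_pos _ hvlam hbdd
            rw [hw, hCA, hρbdd j' hbdd, hν2, if_pos hbdd, add_zero]
            have hs0ne : (∑ j'', ν j'' * ρ j'') ≠ 0 := ne_of_gt hs0pos
            field_simp
          · rw [hw, hρubd j' hbdd, hν2, if_neg hbdd]
            simp
    rw [heq]
    exact hmem
  apply Set.Subset.antisymm
  · -- easy direction : conv D ⊆ C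
    apply convexHull_min
    · rintro z ⟨hzPl, hznint⟩
      refine ⟨hzPl, ?_⟩
      by_contra hcut
      push_neg at hcut
      apply hznint
      have hcut' : (∑ j, z.2.2 j * ρ j) + ∑ k, z.2.1 k / Bk k < 1 := by
        have e1 : ∑ j, z.2.2 j * ρ j
            = ∑ j, z.2.2 j * invSup {α : ℝ | 0 ≤ α ∧ vlam + α • r j ∈ L} :=
          Finset.sum_congr rfl fun j _ => by rw [hρ]
        have e2 : ∑ k, z.2.1 k / Bk k
            = ∑ k, z.2.1 k / sSup {β : ℝ | vlam + β • (v k - vlam) ∈ L} :=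
          Finset.sum_congr rfl fun k _ => by rw [hBk]
        rw [e1, e2]; exact hcut
      rw [hPl] at hzPl
      obtain ⟨hx, hn, hsum1, hm⟩ := hzPl
      obtain ⟨μ1, hμ1⟩ : ∃ f : Eidx → ℝ, ∀ j, f j =
          if BddAbove {α : ℝ | 0 ≤ α ∧ vlam + α • r j ∈ L} then z.2.2 j else 0 :=
        ⟨_, fun _ => rfl⟩
      obtain ⟨μ2, hμ2⟩ : ∃ f : Eidx → ℝ, ∀ j, f j =
          if BddAbove {α : ℝ | 0 ≤ α ∧ vlam + α • r j ∈ L} then 0 else z.2.2 j :=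
        ⟨_, fun _ => rfl⟩
      have hμsplit : ∀ j, z.2.2 j = μ1 j + μ2 j := fun j => by
        rw [hμ1, hμ2]; split <;> simp
      have hlin2 : LinDir L (∑ j, μ2 j • r j) := by
        refine linDir_sum _ fun j => ?_
        rw [hμ2]
        split
        · rw [zero_smul]; exact linDir_zero
        · rename_i h
          exact linDir_smul _ (ray_lin_of_unbounded hpoly hlin hvL h)
      have hkey : vlam + (∑ k, z.2.1 k • (v k - vlam)) + ∑ j, μ1 j • r j ∈ interior L := by
        have hq : ∀ i : Vout ⊕ Eidx, (Sum.elim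
            (fun k => vlam + Bk k • (v k - vlam))
            (fun j => if BddAbove {α : ℝ | 0 ≤ α ∧ vlam + α • r j ∈ L} then
              vlam + (sSup {α : ℝ | 0 ≤ α ∧ vlam + α • r j ∈ L}) • r j else vlam) i) ∈ L := by
          rintro (k | j)
          · exact hBmem k
          · simp only [Sum.elim_inr]
            split
            · rename_i h; exact (supS_mem hcl _ hvL h).2
            · exact hvL
        have hw : ∀ i ∈ Finset.univ, 0 ≤ (Sum.elim
            (fun k => z.2.1 k / Bk k) (fun j => z.2.2 j * ρ j) i) := by
          rintro (k | j) -
          · exact div_nonneg (hn k) (hBpos k).le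
          · exact mul_nonneg (hm j) (hρ0 j)
        have hc0 : (0:ℝ) < 1 - ((∑ j, z.2.2 j * ρ j) + ∑ k, z.2.1 k / Bk k) := by linarith
        have hsumw : (1 - ((∑ j, z.2.2 j * ρ j) + ∑ k, z.2.1 k / Bk k))
            + ∑ i : Vout ⊕ Eidx, (Sum.elim
              (fun k => z.2.1 k / Bk k) (fun j => z.2.2 j * ρ j) i) = 1 := by
          rw [Fintype.sum_sum_type]
          simp only [Sum.elim_inl, Sum.elim_inr]
          ring
        have hcomb := combo_mem_interior Finset.univ hconv hvlam _ _ hw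
          (fun i _ => hq i) _ hc0 hsumw
        have heq : (1 - ((∑ j, z.2.2 j * ρ j) + ∑ k, z.2.1 k / Bk k)) • vlam
            + ∑ i : Vout ⊕ Eidx, (Sum.elim
              (fun k => z.2.1 k / Bk k) (fun j => z.2.2 j * ρ j) i) • (Sum.elim
            (fun k => vlam + Bk k • (v k - vlam))
            (fun j => if BddAbove {α : ℝ | 0 ≤ α ∧ vlam + α • r j ∈ L} then
              vlam + (sSup {α : ℝ | 0 ≤ α ∧ vlam + α • r j ∈ L}) • r j else vlam) i)
            = vlam + (∑ k, z.2.1 k • (v k - vlam)) + ∑ j, μ1 j • r j := by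
          rw [Fintype.sum_sum_type]
          simp only [Sum.elim_inl, Sum.elim_inr]
          have hterm1 : ∀ k, (z.2.1 k / Bk k) • (vlam + Bk k • (v k - vlam))
              = (z.2.1 k / Bk k) • vlam + z.2.1 k • (v k - vlam) := by
            intro k
            rw [smul_add, smul_smul, div_mul_cancel₀ _ (ne_of_gt (hBpos k))]
          have hterm2 : ∀ j, (z.2.2 j * ρ j) •
              (if BddAbove {α : ℝ | 0 ≤ α ∧ vlam + α • r j ∈ L} then
                vlam + (sSup {α : ℝ | 0 ≤ α ∧ vlam + α • r j ∈ L}) • r j else vlam)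
              = (z.2.2 j * ρ j) • vlam + μ1 j • r j := by
            intro j
            split
            · rename_i h
              rw [smul_add, smul_smul, hμ1, if_pos h, hρbdd j h, mul_assoc,
                inv_mul_cancel₀ (ne_of_gt (supS_pos _ hvlam h)), mul_one]
            · rename_i h
              simp [hρubd j h, hμ1, if_neg h]
          rw [Finset.sum_congr rfl (fun k _ => hterm1 k),
            Finset.sum_congr rfl (fun j _ => hterm2 j),
            Finset.sum_add_distrib, Finset.sum_add_distrib,
            ← Finset.sum_smul, ← Finset.sum_smul]
          match_scalars <;> ring
        rwa [heq] at hcomb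
      have hz1 : z.1 = (vlam + (∑ k, z.2.1 k • (v k - vlam)) + ∑ j, μ1 j • r j)
          + ∑ j, μ2 j • r j := by
        rw [hx]
        have : ∑ j, z.2.2 j • r j = ∑ j, μ1 j • r j + ∑ j, μ2 j • r j := by
          rw [← Finset.sum_add_distrib]
          exact Finset.sum_congr rfl fun j _ => by rw [hμsplit j, add_smul]
        rw [this]
        abel
      rw [hz1]
      exact linDir_mem_interior hlin2 hkey
    · -- C is convex
      rintro z1 ⟨h1P, h1c⟩ z2 ⟨h2P, h2c⟩ a b ha hb hab
      refine ⟨hPlconv h1P h2P ha hb hab, ?_⟩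
      have e1 : ∑ j, (a • z1 + b • z2).2.2 j
            * invSup {α : ℝ | 0 ≤ α ∧ vlam + α • r j ∈ L}
          = a * (∑ j, z1.2.2 j * invSup {α : ℝ | 0 ≤ α ∧ vlam + α • r j ∈ L})
            + b * ∑ j, z2.2.2 j * invSup {α : ℝ | 0 ≤ α ∧ vlam + α • r j ∈ L} := by
        rw [← sum_combo_mul]
        refine Finset.sum_congr rfl fun j _ => ?_
        simp [Prod.smul_snd, Prod.snd_add, smul_eq_mul]
      have e2 : ∑ k, (a • z1 + b • z2).2.1 k
            / sSup {β : ℝ | vlam + β • (v k - vlam) ∈ L}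
          = a * (∑ k, z1.2.1 k / sSup {β : ℝ | vlam + β • (v k - vlam) ∈ L})
            + b * ∑ k, z2.2.1 k / sSup {β : ℝ | vlam + β • (v k - vlam) ∈ L} := by
        simp only [div_eq_mul_inv]
        rw [← sum_combo_mul]
        refine Finset.sum_congr rfl fun k _ => ?_
        simp [Prod.smul_snd, Prod.snd_add, smul_eq_mul]
      rw [e1, e2]
      nlinarith [mul_le_mul_of_nonneg_left h1c ha, mul_le_mul_of_nonneg_left h2c hb]
  · -- hard direction : C ⊆ conv D
    rintro z ⟨hzPl, hzcut⟩
    have hzmem := hzPl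
    rw [hPl] at hzmem
    obtain ⟨hx, hn, hE1, hm⟩ := hzmem
    have hcut : 1 ≤ (∑ j, z.2.2 j * ρ j) + ∑ k, z.2.1 k / Bk k := by
      have e1 : ∑ j, z.2.2 j * ρ j
          = ∑ j, z.2.2 j * invSup {α : ℝ | 0 ≤ α ∧ vlam + α • r j ∈ L} :=
        Finset.sum_congr rfl fun j _ => by rw [hρ]
      have e2 : ∑ k, z.2.1 k / Bk k
          = ∑ k, z.2.1 k / sSup {β : ℝ | vlam + β • (v k - vlam) ∈ L} :=
        Finset.sum_congr rfl fun k _ => by rw [hBk]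
      rw [e1, e2]; exact hzcut
    obtain ⟨μ1, hμ1⟩ : ∃ f : Eidx → ℝ, ∀ j, f j =
        if BddAbove {α : ℝ | 0 ≤ α ∧ vlam + α • r j ∈ L} then z.2.2 j else 0 :=
      ⟨_, fun _ => rfl⟩
    obtain ⟨μ2, hμ2⟩ : ∃ f : Eidx → ℝ, ∀ j, f j =
        if BddAbove {α : ℝ | 0 ≤ α ∧ vlam + α • r j ∈ L} then 0 else z.2.2 j :=
      ⟨_, fun _ => rfl⟩
    have hμ1n : ∀ j, 0 ≤ μ1 j := fun j => by rw [hμ1]; split; exacts [hm j, le_rfl]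
    have hμ2n : ∀ j, 0 ≤ μ2 j := fun j => by rw [hμ2]; split; exacts [le_rfl, hm j]
    have hμsplit : ∀ j, z.2.2 j = μ1 j + μ2 j := fun j => by
      rw [hμ1, hμ2]; split <;> simp
    have hμ2ρ : ∀ j, μ2 j * ρ j = 0 := by
      intro j
      rw [hμ2]
      split
      · rw [zero_mul]
      · rename_i h; rw [hρubd j h, mul_zero]
    obtain ⟨M, hM⟩ : ∃ M : ℝ, M = ∑ j, μ1 j * ρ j := ⟨_, rfl⟩
    obtain ⟨E, hE⟩ : ∃ E : ℝ, E = ∑ k, z.2.1 k := ⟨_, rfl⟩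
    obtain ⟨F, hF⟩ : ∃ F : ℝ, F = ∑ k, z.2.1 k / Bk k := ⟨_, rfl⟩
    obtain ⟨τ, hτ⟩ : ∃ τ : ℝ, τ = max E (1 - M) := ⟨_, rfl⟩
    obtain ⟨θ, hθ⟩ : ∃ θ : ℝ, θ = if F ≤ E then 0 else (τ - E)/(F - E) := ⟨_, rfl⟩
    obtain ⟨lam, hlam⟩ : ∃ lam : Vout → ℝ, ∀ k,
        lam k = z.2.1 k * ((1-θ) + θ / Bk k) := ⟨_, fun _ => rfl⟩
    obtain ⟨c, hc⟩ : ∃ c : Vout → ℝ, ∀ k,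
        c k = if lam k = 0 then Bk k else z.2.1 k / lam k := ⟨_, fun _ => rfl⟩
    have hMμ : ∑ j, z.2.2 j * ρ j = M := by
      rw [hM]
      refine Finset.sum_congr rfl fun j _ => ?_
      rw [hμsplit j, add_mul]
      rw [hμ2ρ j, add_zero]
    have hM0 : 0 ≤ M := by
      rw [hM]
      exact Finset.sum_nonneg fun j _ => mul_nonneg (hμ1n j) (hρ0 j)
    have hE0 : 0 ≤ E := by
      rw [hE]; exact Finset.sum_nonneg fun k _ => hn k
    have hEF : E ≤ F := by
      rw [hE, hF]
      refine Finset.sum_le_sum fun k _ => ?_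
      rw [le_div_iff₀ (hBpos k)]
      nlinarith [hn k, hBle1 k, hBpos k]
    have hMF : 1 ≤ M + F := by rw [hF]; rw [hMμ] at hcut; linarith
    have hτE : E ≤ τ := by rw [hτ]; exact le_max_left _ _
    have hτM : 1 - M ≤ τ := by rw [hτ]; exact le_max_right _ _
    have hτF : τ ≤ F := by rw [hτ]; exact max_le hEF (by linarith)
    have hτ1 : τ ≤ 1 := by
      rw [hτ, hE]
      exact max_le hE1 (by linarith)
    have hθ0 : 0 ≤ θ := by
      rw [hθ]
      split
      · exact le_rfl
      · rename_i h
        push_neg at h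
        exact div_nonneg (by linarith) (by linarith)
    have hθ1 : θ ≤ 1 := by
      rw [hθ]
      split
      · exact zero_le_one
      · rename_i h
        push_neg at h
        rw [div_le_one (by linarith)]
        linarith
    have hfac1 : ∀ k, 1 ≤ (1-θ) + θ / Bk k := by
      intro k
      have h1 : θ ≤ θ / Bk k := by
        rw [le_div_iff₀ (hBpos k)]
        nlinarith [hBle1 k, hBpos k]
      linarith
    have hfacB : ∀ k, (1-θ) + θ / Bk k ≤ 1 / Bk k := by
      intro k
      rw [← sub_nonneg]
      have h1 : 1 / Bk k - ((1-θ) + θ / Bk k)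
          = (1 - θ) * (1 / Bk k - 1) + (θ / Bk k - θ + (θ - θ / Bk k)) := by ring
      have h2 : 1 ≤ 1 / Bk k := by
        rw [le_div_iff₀ (hBpos k)]
        rw [one_mul]
        exact hBle1 k
      nlinarith [hfac1 k]
    have hlamn : ∀ k, 0 ≤ lam k := fun k => by
      rw [hlam]
      exact mul_nonneg (hn k) (le_trans zero_le_one (hfac1 k))
    have hlamz : ∀ k, lam k = 0 → z.2.1 k = 0 := by
      intro k h
      rw [hlam] at h
      rcases mul_eq_zero.mp h with h' | h'
      · exact h'
      · exfalso; have := hfac1 k; rw [h'] at this; linarith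
    have hlamle : ∀ k, lam k ≤ z.2.1 k / Bk k := by
      intro k
      have h2 : ((1-θ) + θ / Bk k) * Bk k ≤ 1 := by
        have := (le_div_iff₀ (hBpos k)).mp (hfacB k)
        linarith
      rw [hlam, le_div_iff₀ (hBpos k)]
      nlinarith [hn k]
    have hlamge : ∀ k, z.2.1 k ≤ lam k := by
      intro k
      rw [hlam]
      nlinarith [hfac1 k, hn k]
    have hlamsum : ∑ k, lam k = τ := by
      have hexp : ∑ k, lam k = (1-θ) * E + θ * F := by
        rw [hE, hF, Finset.mul_sum, Finset.mul_sum, ← Finset.sum_add_distrib]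
        refine Finset.sum_congr rfl fun k _ => ?_
        rw [hlam]
        rw [div_eq_mul_one_div θ (Bk k), div_eq_mul_one_div (z.2.1 k) (Bk k)]
        ring
      rw [hexp, hθ]
      split
      · rename_i h
        have hFE : F = E := le_antisymm h hEF
        have hτE' : τ = E := le_antisymm (by rw [hFE] at hτF; exact hτF) hτE
        rw [hFE, hτE']; ring
      · rename_i h
        push_neg at h
        have hne : F - E ≠ 0 := by intro hh; apply h.ne'; linarith
        have hre : (1 - (τ - E)/(F - E)) * E + (τ - E)/(F - E) * F
            = E + ((τ - E)/(F - E)) * (F - E) := by ring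
        rw [hre, div_mul_cancel₀ _ hne]
        ring
    have hck : ∀ k, Bk k ≤ c k ∧ c k ≤ 1 ∧ lam k * c k = z.2.1 k := by
      intro k
      rw [hc]
      split
      · rename_i h
        refine ⟨le_rfl, hBle1 k, ?_⟩
        rw [h, zero_mul, hlamz k h]
      · rename_i h
        have hlp : 0 < lam k := lt_of_le_of_ne (hlamn k) (Ne.symm h)
        refine ⟨?_, ?_, ?_⟩
        · rw [le_div_iff₀ hlp, mul_comm]
          exact (le_div_iff₀ (hBpos k)).mp (hlamle k)
        · rw [div_le_one hlp]
          exact hlamge k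
        · rw [mul_comm, div_mul_cancel₀ _ (ne_of_gt hlp)]
    have hlam0 : 0 ≤ 1 - τ := sub_nonneg.mpr hτ1
    -- the common final step
    have final : ∀ γ δ : ℝ, 0 ≤ γ → 0 ≤ δ → (1 - τ) * δ + τ * γ = 1 →
        ((1 - τ) ≠ 0 → 1 ≤ δ * M) → z ∈ convexHull ℝ D := by
      intro γ δ hγ hδ hcoeff hcut0
      obtain ⟨ν0, hν0⟩ : ∃ f : Eidx → ℝ, ∀ j, f j = δ * μ1 j + μ2 j := ⟨_, fun _ => rfl⟩
      obtain ⟨νv, hνv⟩ : ∃ f : Eidx → ℝ, ∀ j, f j = γ * μ1 j + μ2 j := ⟨_, fun _ => rfl⟩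
      have hν0n : ∀ j, 0 ≤ ν0 j := fun j => by
        rw [hν0]; exact add_nonneg (mul_nonneg hδ (hμ1n j)) (hμ2n j)
      have hνvn : ∀ j, 0 ≤ νv j := fun j => by
        rw [hνv]; exact add_nonneg (mul_nonneg hγ (hμ1n j)) (hμ2n j)
      have hζk : ∀ k, (vlam + c k • (v k - vlam) + ∑ j, νv j • r j,
          (Pi.single k (c k) : Vout → ℝ), νv) ∈ convexHull ℝ D := fun k =>
        vertexPiece k (c k) (hck k).1 (hck k).2.1 νv hνvn
      have hζ0Pl : (vlam + ∑ j, ν0 j • r j, (0 : Vout → ℝ), ν0) ∈ Pl := by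
        rw [hPl]
        exact ⟨by simp, fun k => le_rfl, by simp, hν0n⟩
      have hopt : ∀ S : Set ((Fin n → ℝ) × (Vout → ℝ) × (Eidx → ℝ)), Convex ℝ S →
          (vlam + ∑ j, ν0 j • r j, (0 : Vout → ℝ), ν0) ∈ S →
          (∀ k, (vlam + c k • (v k - vlam) + ∑ j, νv j • r j,
            (Pi.single k (c k) : Vout → ℝ), νv) ∈ S) →
          (1-τ) • (vlam + ∑ j, ν0 j • r j, (0 : Vout → ℝ), ν0)
            + ∑ k, lam k • (vlam + c k • (v k - vlam) + ∑ j, νv j • r j,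
              (Pi.single k (c k) : Vout → ℝ), νv) ∈ S := by
        intro S hS h0S hkS
        have hmm := hS.sum_mem (t := (Finset.univ : Finset (Option Vout)))
          (w := fun i => i.elim (1-τ) lam)
          (z := fun i => i.elim (vlam + ∑ j, ν0 j • r j, (0 : Vout → ℝ), ν0)
            (fun k => (vlam + c k • (v k - vlam) + ∑ j, νv j • r j,
              (Pi.single k (c k) : Vout → ℝ), νv)))
          (fun i _ => by cases i; exacts [hlam0, hlamn _])
          (by rw [Fintype.sum_option]; simp only [Option.elim]; rw [hlamsum]; ring)
          (fun i _ => by cases i; exacts [h0S, hkS _])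
        rwa [Fintype.sum_option] at hmm
      have hsnd1 : ((1-τ) • (vlam + ∑ j, ν0 j • r j, (0 : Vout → ℝ), ν0)
          + ∑ k, lam k • (vlam + c k • (v k - vlam) + ∑ j, νv j • r j,
            (Pi.single k (c k) : Vout → ℝ), νv)).2.1 = z.2.1 := by
        show (1-τ) • (0 : Vout → ℝ) + (∑ k, lam k • (vlam + c k • (v k - vlam)
            + ∑ j, νv j • r j, (Pi.single k (c k) : Vout → ℝ), νv)).2.1 = z.2.1
        rw [prod_snd_sum, prod_fst_sum]
        simp only [Prod.smul_snd, Prod.smul_fst]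
        rw [smul_zero, zero_add]
        funext k'
        rw [Finset.sum_apply]
        have : ∀ k, (lam k • (Pi.single k (c k) : Vout → ℝ)) k'
            = lam k * (Pi.single k (c k) : Vout → ℝ) k' := fun k => rfl
        rw [Finset.sum_congr rfl fun k _ => this k, sum_mul_single k' lam c]
        exact (hck k').2.2
      have hsnd2 : ((1-τ) • (vlam + ∑ j, ν0 j • r j, (0 : Vout → ℝ), ν0)
          + ∑ k, lam k • (vlam + c k • (v k - vlam) + ∑ j, νv j • r j,
            (Pi.single k (c k) : Vout → ℝ), νv)).2.2 = z.2.2 := by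
        show (1-τ) • ν0 + (∑ k, lam k • (vlam + c k • (v k - vlam)
            + ∑ j, νv j • r j, (Pi.single k (c k) : Vout → ℝ), νv)).2.2 = z.2.2
        rw [prod_snd_sum, prod_snd_sum]
        simp only [Prod.smul_snd]
        have : ∑ k, lam k • νv = τ • νv := by
          rw [← Finset.sum_smul, hlamsum]
        rw [this]
        funext j
        show (1-τ) * ν0 j + τ * νv j = z.2.2 j
        rw [hν0, hνv, hμsplit j]
        linear_combination (μ1 j) * hcoeff
      have heqz : z = (1-τ) • (vlam + ∑ j, ν0 j • r j, (0 : Vout → ℝ), ν0)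
          + ∑ k, lam k • (vlam + c k • (v k - vlam) + ∑ j, νv j • r j,
            (Pi.single k (c k) : Vout → ℝ), νv) := by
        apply hPl_ext z _ hzPl (hopt Pl hPlconv hζ0Pl (fun k => hDPl (hζk k)))
        exact (Prod.ext hsnd1 hsnd2).symm
      rw [heqz]
      by_cases h0 : (1 : ℝ) - τ = 0
      · rw [h0, zero_smul, zero_add]
        refine (convex_convexHull ℝ D).sum_mem (fun k _ => hlamn k) ?_ (fun k _ => hζk k)
        rw [hlamsum]
        linarith
      · have hζ0 : (vlam + ∑ j, ν0 j • r j, (0 : Vout → ℝ), ν0) ∈ convexHull ℝ D := by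
          apply zeroPiece ν0 hν0n
          have hval : ∑ j, ν0 j * ρ j = δ * M := by
            have h1 : ∑ j, ν0 j * ρ j = ∑ j, (δ * (μ1 j * ρ j) + μ2 j * ρ j) :=
              Finset.sum_congr rfl fun j _ => by rw [hν0]; ring
            rw [h1, Finset.sum_add_distrib,
              Finset.sum_congr rfl (fun j (_ : j ∈ Finset.univ) => hμ2ρ j),
              Finset.sum_const_zero, add_zero, ← Finset.mul_sum, hM]
          rw [hval]
          exact hcut0 h0
        exact hopt (convexHull ℝ D) (convex_convexHull ℝ D) hζ0 hζk
    -- choose the allocation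
    by_cases hM1 : 1 ≤ M
    · exact final 1 1 zero_le_one zero_le_one (by ring)
        (fun _ => by rw [one_mul]; exact hM1)
    · by_cases hM00 : M = 0
      · refine final 1 1 zero_le_one zero_le_one (by ring) (fun h0 => absurd ?_ h0)
        rw [hτ, hM00, sub_zero, max_eq_right (by rw [hE]; exact hE1)]
        ring
      · have hMpos : 0 < M := lt_of_le_of_ne hM0 (Ne.symm hM00)
        have hτpos : 0 < τ := lt_of_lt_of_le (by linarith [hM1] : (0:ℝ) < 1 - M) hτM
        refine final ((M - (1-τ))/(M*τ)) (1/M) ?_ ?_ ?_ ?_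
        · exact div_nonneg (by linarith) (by positivity)
        · positivity
        · field_simp
          ring
        · intro _
          rw [one_div, inv_mul_cancel₀ (ne_of_gt hMpos)]
end
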